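/- No ≥1-subdivision of K₄ (the complete graph on four vertices) is a restricted frame graph; that is, no graph obtained from K₄ by subdividing every edge at least once is a restricted frame graph. -/

import Mathlib

/-! ## Frames and restricted frame graphs -/

/-- An axis-parallel box in `ℝ²`, i.e. a product `[x1,x2] × [y1,y2]` of two closed
nondegenerate intervals. -/
structure Box : Type where
  x1 : ℝ
  x2 : ℝ
  y1 : ℝ
  y2 : ℝ
  hx : x1 < x2
  hy : y1 < y2

namespace Box

/-- The region bounded by the frame of a box: the closed box itself. -/
def region (B : Box) : Set (ℝ × ℝ) :=
  {p : ℝ × ℝ | B.x1 ≤ p.1 ∧ p.1 ≤ B.x2 ∧ B.y1 ≤ p.2 ∧ p.2 ≤ B.y2}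

/-- The frame of a box: the topological boundary of the closed box. -/
def frame (B : Box) : Set (ℝ × ℝ) :=
  {p : ℝ × ℝ | p ∈ B.region ∧ (p.1 = B.x1 ∨ p.1 = B.x2 ∨ p.2 = B.y1 ∨ p.2 = B.y2)}

/-- The left side `{x1} × [y1,y2]` of a frame. -/
def leftSide (B : Box) : Set (ℝ × ℝ) :=
  {p : ℝ × ℝ | p.1 = B.x1 ∧ B.y1 ≤ p.2 ∧ p.2 ≤ B.y2}

/-- The right side `{x2} × [y1,y2]` of a frame. -/
def rightSide (B : Box) : Set (ℝ × ℝ) :=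
  {p : ℝ × ℝ | p.1 = B.x2 ∧ B.y1 ≤ p.2 ∧ p.2 ≤ B.y2}

/-- The top side `[x1,x2] × {y2}` of a frame. -/
def topSide (B : Box) : Set (ℝ × ℝ) :=
  {p : ℝ × ℝ | p.2 = B.y2 ∧ B.x1 ≤ p.1 ∧ p.1 ≤ B.x2}

/-- The bottom side `[x1,x2] × {y1}` of a frame. -/
def bottomSide (B : Box) : Set (ℝ × ℝ) :=
  {p : ℝ × ℝ | p.2 = B.y1 ∧ B.x1 ≤ p.1 ∧ p.1 ≤ B.x2}

/-- The four corners of a frame. -/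
def corners (B : Box) : Set (ℝ × ℝ) :=
  {(B.x1, B.y1), (B.x1, B.y2), (B.x2, B.y1), (B.x2, B.y2)}

/-- `Box.Inside inner outer` : the frame of `outer` contains the frame of `inner`,
i.e. the two frames are disjoint and the frame of `inner` is contained in the region
bounded by the frame of `outer`. -/
def Inside (inner outer : Box) : Prop :=
  inner.frame ∩ outer.frame = ∅ ∧ inner.frame ⊆ outer.region

/-- `Box.Outside B outer` : the frames are disjoint and `B` is not inside `outer`. -/
def Outside (B outer : Box) : Prop :=
  B.frame ∩ outer.frame = ∅ ∧ ¬ Inside B outer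

end Box

/-- A family of frames `(F v)` is a representation of the graph `G` as a restricted
frame graph: distinct vertices are adjacent iff their frames intersect, and the four
restrictions on the representation hold. -/
structure IsFrameRepresentation {V : Type} (G : SimpleGraph V) (F : V → Box) : Prop where
  /-- Distinct vertices are adjacent iff their frames intersect. -/
  adj_iff : ∀ u v : V, u ≠ v → (G.Adj u v ↔ ((F u).frame ∩ (F v).frame).Nonempty)
  /-- (1) Corners of a frame do not coincide with any point of another frame. -/
  corner_free : ∀ u v : V, u ≠ v → (F u).corners ∩ (F v).frame = ∅
  /-- (2) The left side of a frame does not intersect any other frame. -/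
  left_free : ∀ u v : V, u ≠ v → (F u).leftSide ∩ (F v).frame = ∅
  /-- (3) If the right side of a frame intersects a second frame, this right side
  intersects both the top and the bottom side of that second frame. -/
  right_cross : ∀ u v : V, u ≠ v →
    ((F u).rightSide ∩ (F v).frame).Nonempty →
    ((F u).rightSide ∩ (F v).topSide).Nonempty ∧
      ((F u).rightSide ∩ (F v).bottomSide).Nonempty
  /-- (4) If two frames intersect, no third frame is entirely contained in the
  intersection of the regions bounded by the two frames. -/
  not_nested : ∀ u v w : V, u ≠ v → w ≠ u → w ≠ v →
    ((F u).frame ∩ (F v).frame).Nonempty →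
    ¬ ((F w).frame ⊆ (F u).region ∩ (F v).region)

/-- A graph is a restricted frame graph if it admits a frame representation. -/
def IsRestrictedFrameGraph {V : Type} (G : SimpleGraph V) : Prop :=
  ∃ F : V → Box, IsFrameRepresentation G F

/-! ## Basic graph notions -/

/-- The closed neighborhood `N[u] = {u} ∪ N(u)`. -/
def closedNbhd {V : Type} (G : SimpleGraph V) (u : V) : Set V :=
  insert u (G.neighborSet u)

/-- `G` has a full star-cutset: for some vertex `u` the removal of `N[u]`
disconnects `G`. -/
def HasFullStarCutset {V : Type} (G : SimpleGraph V) : Prop :=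
  ∃ u : V, ¬ (G.induce ((closedNbhd G u)ᶜ)).Preconnected

/-- `v` is a cut-vertex of `G`: its removal disconnects `G`. -/
def IsCutVertex {V : Type} (G : SimpleGraph V) (v : V) : Prop :=
  ¬ (G.induce {u : V | u ≠ v}).Preconnected

/-- `G` is a path graph: its vertices can be enumerated `0, …, n-1` so that two
vertices are adjacent iff they are consecutive. -/
def IsPathGraph {V : Type} (G : SimpleGraph V) : Prop :=
  ∃ (n : ℕ) (e : V ≃ Fin n), ∀ u v : V,
    G.Adj u v ↔ ((e u : ℕ) + 1 = (e v : ℕ) ∨ (e v : ℕ) + 1 = (e u : ℕ))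

/-- `G` is a cycle graph (on at least 3 vertices). -/
def IsCycleGraphOn {V : Type} (G : SimpleGraph V) : Prop :=
  ∃ n : ℕ, 3 ≤ n ∧ ∃ e : V ≃ Fin n, ∀ u v : V,
    G.Adj u v ↔ (((e u : ℕ) + 1) % n = (e v : ℕ) ∨ ((e v : ℕ) + 1) % n = (e u : ℕ))

/-- `x` is a leaf of `T`: it has exactly one neighbor. -/
def IsLeaf {V : Type} (T : SimpleGraph V) (x : V) : Prop :=
  (T.neighborSet x).ncard = 1

/-- `G` is a chandelier with pivot `v`: `G - v` is a tree `T` and `v` is adjacent to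
exactly the leaves of `T`. -/
def IsChandelierWithPivot {V : Type} (G : SimpleGraph V) (v : V) : Prop :=
  (G.induce {u : V | u ≠ v}).IsTree ∧
    ∀ u : ↥{u : V | u ≠ v}, (G.Adj v u.val ↔ IsLeaf (G.induce {u : V | u ≠ v}) u)

/-- `G` is a chandelier. -/
def IsChandelier {V : Type} (G : SimpleGraph V) : Prop :=
  ∃ v : V, IsChandelierWithPivot G v

/-- `G` is a luxury chandelier: a chandelier (with pivot `v` and tree `T = G - v`)
such that the neighbor in `T` of each leaf of `T` has degree 2 in `T`. -/
def IsLuxuryChandelier {V : Type} (G : SimpleGraph V) : Prop :=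
  ∃ v : V, IsChandelierWithPivot G v ∧
    ∀ x y : ↥{u : V | u ≠ v}, (G.induce {u : V | u ≠ v}).Adj x y →
      IsLeaf (G.induce {u : V | u ≠ v}) x →
      ((G.induce {u : V | u ≠ v}).neighborSet y).ncard = 2

/-! ## Multigraphs and subdivisions -/

/-- A loopless multigraph on vertex set `V`: a symmetric multiplicity function. -/
structure Multigraph (V : Type) where
  m : V → V → ℕ
  symm : ∀ u v : V, m u v = m v u
  loopless : ∀ v : V, m v v = 0

/-- The multigraph associated with a simple graph (each edge has multiplicity 1). -/
noncomputable def SimpleGraph.toMultigraph {V : Type} (G : SimpleGraph V) : Multigraph V where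
  m u v := @ite ℕ (G.Adj u v) (Classical.dec _) 1 0
  symm u v := by
    beta_reduce
    by_cases h : G.Adj u v
    · rw [if_pos h, if_pos (G.adj_symm h)]
    · rw [if_neg h, if_neg (fun h' => h (G.adj_symm h'))]
  loopless v := by
    beta_reduce
    rw [if_neg (G.loopless.irrefl v)]

/-- The interior (set of internal vertices) of a walk. -/
def walkInterior {V : Type} {G : SimpleGraph V} {a b : V} (p : G.Walk a b) : Set V :=
  {w : V | w ∈ p.support ∧ w ≠ a ∧ w ≠ b}

/-- A witness that the simple graph `H` is a `≥k`-subdivision of the multigraph `G`: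
each edge of `G` (counted with multiplicity) is replaced by a path with at least
`k+1` edges between (the images of) its endpoints, these paths being internally
disjoint from each other and from the branch vertices, and covering all of `H`. -/
structure MultiSubdivision {V W : Type} (G : Multigraph V) (H : SimpleGraph W) (k : ℕ) where
  /-- the embedding of branch vertices -/
  f : V ↪ W
  /-- the path replacing the `i`-th parallel edge between `u` and `v` -/
  path : ∀ u v : V, Fin (G.m u v) → H.Walk (f u) (f v)
  path_symm : ∀ (u v : V) (i : Fin (G.m u v)),
    path v u (Fin.cast (G.symm u v) i) = (path u v i).reverse
  path_ne : ∀ (u v : V) (i i' : Fin (G.m u v)), (i : ℕ) ≠ (i' : ℕ) →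
    path u v i ≠ path u v i'
  isPath : ∀ (u v : V) (i : Fin (G.m u v)), (path u v i).IsPath
  length_le : ∀ (u v : V) (i : Fin (G.m u v)), k + 1 ≤ (path u v i).length
  /-- the paths are internally disjoint from the branch vertices -/
  interior_avoid : ∀ (u v : V) (i : Fin (G.m u v)) (x : V),
    f x ∉ walkInterior (path u v i)
  /-- distinct paths are pairwise internally disjoint -/
  interior_disjoint : ∀ (u v : V) (i : Fin (G.m u v)) (u' v' : V) (i' : Fin (G.m u' v')),
    (walkInterior (path u v i) ∩ walkInterior (path u' v' i')).Nonempty →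
    (u = u' ∧ v = v' ∧ (i : ℕ) = (i' : ℕ)) ∨ (u = v' ∧ v = u' ∧ (i : ℕ) = (i' : ℕ))
  /-- every vertex of `H` is a branch vertex or an internal vertex of a path -/
  vertex_cover : ∀ w : W, (∃ x : V, f x = w) ∨
    ∃ (u v : V) (i : Fin (G.m u v)), w ∈ walkInterior (path u v i)
  /-- every edge of `H` lies on one of the paths -/
  edge_cover : ∀ e ∈ H.edgeSet, ∃ (u v : V) (i : Fin (G.m u v)), e ∈ (path u v i).edges

/-- `H` is a `≥k`-subdivision of the multigraph `G`. -/
def IsSubdivisionGE {V W : Type} (G : Multigraph V) (k : ℕ) (H : SimpleGraph W) : Prop :=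
  Nonempty (MultiSubdivision G H k)

/-- `H` is a subdivision of the simple graph `G` (every edge is replaced by a path
with at least one edge). -/
def IsSubdivision {V W : Type} (G : SimpleGraph V) (H : SimpleGraph W) : Prop :=
  IsSubdivisionGE G.toMultigraph 0 H

namespace Multigraph

/-- The underlying simple graph of a multigraph. -/
def support {V : Type} (G : Multigraph V) : SimpleGraph V where
  Adj u v := 0 < G.m u v
  symm := by
    constructor
    intro u v h
    rw [G.symm v u]
    exact h
  loopless := by
    constructor
    intro v h
    rw [G.loopless v] at h
    exact Nat.lt_irrefl 0 h

/-- A multigraph is connected if its underlying simple graph is. -/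
def Connected {V : Type} (G : Multigraph V) : Prop :=
  G.support.Connected

/-- A multigraph is 2-connected if it is connected, has at least two vertices, and
deleting any single vertex leaves it connected. -/
def TwoConnected {V : Type} (G : Multigraph V) : Prop :=
  G.support.Connected ∧ (∃ u v : V, u ≠ v) ∧
    ∀ v : V, (G.support.induce {u : V | u ≠ v}).Connected

/-- `v` is a feedback vertex of the multigraph `G`: `G - v` contains no cycle
(where a pair of parallel edges forms a cycle of length 2). -/
def IsFeedbackVertex {V : Type} (G : Multigraph V) (v : V) : Prop :=
  (G.support.induce {u : V | u ≠ v}).IsAcyclic ∧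
    ∀ u w : V, u ≠ v → w ≠ v → G.m u w ≤ 1

end Multigraph

/-! ## Induced cycles and big vertices -/

/-- `C` induces a cycle in `G`. -/
def IsInducedCycle {V : Type} (G : SimpleGraph V) (C : Set V) : Prop :=
  IsCycleGraphOn (G.induce C)

/-- `v` is a big vertex of the (induced cycle on) `C` with respect to the frame
representation `F`: `v ∈ C` and `F v` contains the frame of every vertex of `C`
outside `N[v]`. -/
def IsBigVertexOf {V : Type} (G : SimpleGraph V) (F : V → Box) (C : Set V) (v : V) : Prop :=
  v ∈ C ∧ ∀ u ∈ C, u ≠ v → ¬ G.Adj v u → Box.Inside (F u) (F v)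

/-- `v` is a big vertex of the representation `F`: it is a big vertex of some
induced cycle of `G`. -/
def IsBigVertex {V : Type} (G : SimpleGraph V) (F : V → Box) (v : V) : Prop :=
  ∃ C : Set V, IsInducedCycle G C ∧ IsBigVertexOf G F C v

/-! ## Gluing a chandelier onto a vertex -/

/-- The graph obtained from the disjoint union of `G₁` and `G₂` by identifying the
vertex `v` of `G₁` with the vertex `p` of `G₂`. -/
def glueAt {V₁ V₂ : Type} (G₁ : SimpleGraph V₁) (G₂ : SimpleGraph V₂) (v : V₁) (p : V₂) :
    SimpleGraph (V₁ ⊕ {x : V₂ // x ≠ p}) :=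
  SimpleGraph.fromRel (fun a b =>
    match a, b with
    | Sum.inl u, Sum.inl w => G₁.Adj u w
    | Sum.inr u, Sum.inr w => G₂.Adj u.val w.val
    | Sum.inl u, Sum.inr w => u = v ∧ G₂.Adj p w.val
    | Sum.inr _, Sum.inl _ => False)

/-! ## The multigraphs `Ĥ₁` and `Ĥ₂` -/

/-- The multiplicity matrix of `Ĥ₁` (vertices `a₁ = 0`, `b₁ = 1`, `v₁ = 2`, `v₂ = 3`,
`a₂ = 4`, `b₂ = 5`). -/
def H1hatMatrix : Matrix (Fin 6) (Fin 6) ℕ :=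
  !![0, 2, 1, 0, 0, 0;
     2, 0, 1, 0, 0, 0;
     1, 1, 0, 1, 0, 0;
     0, 0, 1, 0, 1, 1;
     0, 0, 0, 1, 0, 2;
     0, 0, 0, 1, 2, 0]

/-- The multigraph `Ĥ₁`: two disjoint digons `a₁b₁`, `a₂b₂`, and single edges
`a₁v₁`, `b₁v₁`, `v₁v₂`, `a₂v₂`, `b₂v₂`. -/
def H1hat : Multigraph (Fin 6) where
  m u v := H1hatMatrix u v
  symm := by intro u v; fin_cases u <;> fin_cases v <;> rfl
  loopless := by intro v; fin_cases v <;> rfl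

/-- The multiplicity matrix of `Ĥ₂` (vertices `a₁ = 0`, `b₁ = 1`, `v = 2`,
`a₂ = 3`, `b₂ = 4`). -/
def H2hatMatrix : Matrix (Fin 5) (Fin 5) ℕ :=
  !![0, 2, 1, 0, 0;
     2, 0, 1, 0, 0;
     1, 1, 0, 1, 1;
     0, 0, 1, 0, 2;
     0, 0, 1, 2, 0]

/-- The multigraph `Ĥ₂`: two digons `a₁b₁`, `a₂b₂`, and single edges
`a₁v`, `b₁v`, `a₂v`, `b₂v`. -/
def H2hat : Multigraph (Fin 5) where
  m u v := H2hatMatrix u v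
  symm := by intro u v; fin_cases u <;> fin_cases v <;> rfl
  loopless := by intro v; fin_cases v <;> rfl

/-! ## Subdivisions of `K₄` and their type -/

/-- The complete graph on four vertices. -/
def K4 : SimpleGraph (Fin 4) := ⊤

/-- The set of edges of `K₄` that are subdivided at least once in the subdivision
witnessed by `S` (i.e. replaced by a path with at least two edges). -/
def subdividedEdges {W : Type} {H : SimpleGraph W}
    (S : MultiSubdivision K4.toMultigraph H 0) : Set (Sym2 (Fin 4)) :=
  {e : Sym2 (Fin 4) | ∃ (u v : Fin 4) (i : Fin (K4.toMultigraph.m u v)),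
    e = s(u, v) ∧ 2 ≤ (S.path u v i).length}

/-! ## Adding a twin -/

/-- The graph obtained from `G` by adding a twin of `v`: a new vertex, non-adjacent
to `v`, whose neighborhood is exactly `N(v)`. -/
def addTwin {V : Type} (G : SimpleGraph V) (v : V) : SimpleGraph (V ⊕ Unit) :=
  SimpleGraph.fromRel (fun a b =>
    match a, b with
    | Sum.inl u, Sum.inl w => G.Adj u w
    | Sum.inr _, Sum.inl u => G.Adj v u
    | _, _ => False)

/-! ## The construction of Burling and Pawlik et al. -/

/-- A graph-stable set pair: a graph together with a collection of sets of vertices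
(intended: stable sets). -/
structure GSPair : Type 1 where
  V : Type
  G : SimpleGraph V
  S : Set (Set V)

namespace GSPair

/-- The vertex type of `next P`: the original vertices, the vertices `(s, u)` of the
copy `H_s` of the graph for each `s ∈ 𝒮`, and the new vertices `v_{s,t}`. -/
abbrev nextVertex (P : GSPair) : Type :=
  P.V ⊕ ((↥P.S × P.V) ⊕ (↥P.S × ↥P.S))

/-- The adjacency generator for the graph of `next P`. -/
def nextRel (P : GSPair) : P.nextVertex → P.nextVertex → Prop
  | Sum.inl u, Sum.inl v => P.G.Adj u v
  | Sum.inr (Sum.inl (s, u)), Sum.inr (Sum.inl (t, v)) => s = t ∧ P.G.Adj u v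
  | Sum.inr (Sum.inr (s, t)), Sum.inr (Sum.inl (s', v)) => s = s' ∧ v ∈ (t : Set P.V)
  | _, _ => False

/-- The procedure `next`: add a disjoint copy `H_s` of the graph for each `s ∈ 𝒮`, a
vertex `v_{s,t}` whose neighborhood is exactly the copy of `t` inside `H_s` for all
`s, t ∈ 𝒮`, and take as new collection of stable sets all `s ∪ t_s` and
`s ∪ {v_{s,t}}`. -/
def next (P : GSPair) : GSPair where
  V := P.nextVertex
  G := SimpleGraph.fromRel P.nextRel
  S := {A : Set P.nextVertex | ∃ s t : ↥P.S,
    A = (Sum.inl '' (s : Set P.V) : Set P.nextVertex) ∪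
        ((fun u : P.V => (Sum.inr (Sum.inl (s, u)) : P.nextVertex)) '' (t : Set P.V)) ∨
    A = (Sum.inl '' (s : Set P.V) : Set P.nextVertex) ∪ {Sum.inr (Sum.inr (s, t))}}

/-- The starting pair: a single vertex, with the single stable set consisting of
that vertex. -/
def base : GSPair := ⟨PUnit, ⊥, {Set.univ}⟩

/-- `P` is an induced subgraph-stable set pair of `Q`. -/
def IsInducedSubpair (P Q : GSPair) : Prop :=
  ∃ f : P.V ↪ Q.V, (∀ u v : P.V, P.G.Adj u v ↔ Q.G.Adj (f u) (f v)) ∧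
    ∀ A ∈ P.S, ∃ B ∈ Q.S, A = f ⁻¹' B

/-- A graph-stable set pair is constructible if it is an induced subgraph-stable set
pair of some iterate of `next` on the starting pair. -/
def Constructible (P : GSPair) : Prop :=
  ∃ i : ℕ, IsInducedSubpair P (next^[i] base)

end GSPair



namespace FrameProof

/-- `A` crosses `B`: the right side of `A` crosses `B`. -/
def CrossB (A B : Box) : Prop :=
  A.x1 < B.x1 ∧ B.x1 < A.x2 ∧ A.x2 < B.x2 ∧ A.y1 < B.y1 ∧ B.y2 < A.y2

/-- `A` is strictly nested inside `B`. -/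
def NestedB (A B : Box) : Prop :=
  B.x1 < A.x1 ∧ A.x2 < B.x2 ∧ B.y1 < A.y1 ∧ A.y2 < B.y2

lemma notMem_of_empty {s t : Set (ℝ × ℝ)} (h : s ∩ t = ∅) {p : ℝ × ℝ}
    (hs : p ∈ s) (ht : p ∈ t) : False := by
  have := Set.eq_empty_iff_forall_notMem.1 h p
  exact this ⟨hs, ht⟩

lemma corner_mem_x2y2 (A : Box) : ((A.x2, A.y2) : ℝ × ℝ) ∈ A.corners := by
  simp [Box.corners]
lemma corner_mem_x2y1 (A : Box) : ((A.x2, A.y1) : ℝ × ℝ) ∈ A.corners := by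
  simp [Box.corners]
lemma corner_mem_x1y2 (A : Box) : ((A.x1, A.y2) : ℝ × ℝ) ∈ A.corners := by
  simp [Box.corners]
lemma corner_mem_x1y1 (A : Box) : ((A.x1, A.y1) : ℝ × ℝ) ∈ A.corners := by
  simp [Box.corners]

/-- If the right side of `A` meets the frame of `B`, then `A` crosses `B`. -/
lemma cross_of_right {A B : Box}
    (hcAB : A.corners ∩ B.frame = ∅) (hcBA : B.corners ∩ A.frame = ∅)
    (hlA : A.leftSide ∩ B.frame = ∅)
    (hrA : (A.rightSide ∩ B.topSide).Nonempty ∧ (A.rightSide ∩ B.bottomSide).Nonempty) :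
    CrossB A B := by
  obtain ⟨⟨qt, hqt1, hqt2⟩, ⟨qb, hqb1, hqb2⟩⟩ := hrA
  obtain ⟨hq1, hq2, hq3⟩ := hqt1
  obtain ⟨hq4, hq5, hq6⟩ := hqt2
  obtain ⟨hb1, hb2, hb3⟩ := hqb1
  obtain ⟨hb4, hb5, hb6⟩ := hqb2
  have h1 : A.y1 ≤ B.y2 := by rw [hq4] at hq2; exact hq2
  have h2 : B.y2 ≤ A.y2 := by rw [hq4] at hq3; exact hq3
  have h3 : A.y1 ≤ B.y1 := by rw [hb4] at hb2; exact hb2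
  have h4 : B.y1 ≤ A.y2 := by rw [hb4] at hb3; exact hb3
  have h5 : B.x1 ≤ A.x2 := by rw [hq1] at hq5; exact hq5
  have h6 : A.x2 ≤ B.x2 := by rw [hq1] at hq6; exact hq6
  have hy2 : B.y2 < A.y2 := by
    rcases lt_or_eq_of_le h2 with h | h
    · exact h
    · exact absurd (notMem_of_empty hcAB (corner_mem_x2y2 A)
        ⟨⟨h5, h6, by linarith [B.hy], by linarith⟩, by right; right; right; linarith⟩) not_false
  have hy1 : A.y1 < B.y1 := by
    rcases lt_or_eq_of_le h3 with h | h
    · exact h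
    · exact absurd (notMem_of_empty hcAB (corner_mem_x2y1 A)
        ⟨⟨h5, h6, by linarith, by linarith [B.hy]⟩, by right; right; left; linarith⟩) not_false
  have hx1 : B.x1 < A.x2 := by
    rcases lt_or_eq_of_le h5 with h | h
    · exact h
    · exact absurd (notMem_of_empty hcBA (corner_mem_x1y2 B)
        ⟨⟨by linarith [A.hx], by linarith, by linarith, by linarith⟩,
          by right; left; linarith⟩) not_false
  have hx2 : A.x2 < B.x2 := by
    rcases lt_or_eq_of_le h6 with h | h
    · exact h
    · exact absurd (notMem_of_empty hcBA (corner_mem_x2y2 B)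
        ⟨⟨by linarith [A.hx], by linarith, by linarith, by linarith⟩,
          by right; left; linarith⟩) not_false
  have hxx1 : A.x1 < B.x1 := by
    by_contra hcon
    push_neg at hcon
    exact notMem_of_empty hlA (p := (A.x1, B.y2)) ⟨rfl, by linarith, by linarith⟩
      ⟨⟨by linarith, by linarith [A.hx], by linarith [B.hy], le_refl _⟩,
        by right; right; right; rfl⟩
  exact ⟨hxx1, hx1, hx2, hy1, hy2⟩

/-- Main geometric lemma: if the frames of `A` and `B` meet (under the restrictions),
then one crosses the other. -/
lemma cross_or_cross {A B : Box}
    (hAB : (A.frame ∩ B.frame).Nonempty)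
    (hcAB : A.corners ∩ B.frame = ∅) (hcBA : B.corners ∩ A.frame = ∅)
    (hlA : A.leftSide ∩ B.frame = ∅) (hlB : B.leftSide ∩ A.frame = ∅)
    (hrA : (A.rightSide ∩ B.frame).Nonempty →
      (A.rightSide ∩ B.topSide).Nonempty ∧ (A.rightSide ∩ B.bottomSide).Nonempty)
    (hrB : (B.rightSide ∩ A.frame).Nonempty →
      (B.rightSide ∩ A.topSide).Nonempty ∧ (B.rightSide ∩ A.bottomSide).Nonempty) :
    CrossB A B ∨ CrossB B A := by
  obtain ⟨p, hpA, hpB⟩ := hAB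
  obtain ⟨⟨ha1, ha2, ha3, ha4⟩, hA⟩ := hpA
  obtain ⟨⟨hb1, hb2, hb3, hb4⟩, hB⟩ := hpB
  rcases hA with h | h | h | h
  · exact absurd (notMem_of_empty hlA ⟨h, ha3, ha4⟩ ⟨⟨hb1, hb2, hb3, hb4⟩, hB⟩) not_false
  · exact Or.inl (cross_of_right hcAB hcBA hlA
      (hrA ⟨p, ⟨h, ha3, ha4⟩, ⟨⟨hb1, hb2, hb3, hb4⟩, hB⟩⟩))
  all_goals {
    rcases hB with h' | h' | h' | h'
    · exact absurd (notMem_of_empty hlB ⟨h', hb3, hb4⟩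
        ⟨⟨ha1, ha2, ha3, ha4⟩, by tauto⟩) not_false
    · exact Or.inr (cross_of_right hcBA hcAB hlB
        (hrB ⟨p, ⟨h', hb3, hb4⟩, ⟨⟨ha1, ha2, ha3, ha4⟩, by tauto⟩⟩))
    all_goals {
      exfalso
      rcases le_total B.x1 A.x1 with hc | hc
      · refine notMem_of_empty hcAB (p := (A.x1, p.2)) ?_
          ⟨⟨hc, by linarith, hb3, hb4⟩, by tauto⟩
        rw [h]
        first
          | exact corner_mem_x1y1 A
          | exact corner_mem_x1y2 A
      · refine notMem_of_empty hcBA (p := (B.x1, p.2)) ?_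
          ⟨⟨hc, by linarith, ha3, ha4⟩, by tauto⟩
        rw [h']
        first
          | exact corner_mem_x1y1 B
          | exact corner_mem_x1y2 B
    }
  }

/-- Nesting from disjoint frames with overlapping boxes. -/
lemma nested_or_nested {A B : Box}
    (hdisj : A.frame ∩ B.frame = ∅)
    (h1 : A.x1 ≤ B.x2) (h2 : B.x1 ≤ A.x2) (h3 : A.y1 ≤ B.y2) (h4 : B.y1 ≤ A.y2) :
    NestedB A B ∨ NestedB B A := by
  -- the "impossible" configuration: B.x1 ≤ A.x1 and A.y1 ≤ B.y1 is impossible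
  have himp : ∀ C D : Box, C.frame ∩ D.frame = ∅ →
      C.x1 ≤ D.x2 → D.y1 ≤ C.y2 → D.x1 ≤ C.x1 → C.y1 ≤ D.y1 → False := by
    intro C D hd hCD hDC hx hy
    exact notMem_of_empty hd (p := (C.x1, D.y1))
      ⟨⟨le_refl _, by linarith [C.hx], hy, hDC⟩, by left; rfl⟩
      ⟨⟨hx, hCD, le_refl _, by linarith [D.hy]⟩, by right; right; left; rfl⟩
  -- the nested configuration
  have hnest : ∀ C D : Box, C.frame ∩ D.frame = ∅ →
      C.x1 ≤ D.x2 → D.x1 ≤ C.x2 → C.y1 ≤ D.y2 → D.y1 ≤ C.y2 →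
      D.x1 ≤ C.x1 → D.y1 ≤ C.y1 → NestedB C D := by
    intro C D hd k1 k2 k3 k4 hx hy
    have hc : ((C.x1, C.y1) : ℝ × ℝ) ∈ D.region := ⟨hx, k1, hy, by linarith⟩
    have hnotfr : ((C.x1, C.y1) : ℝ × ℝ) ∉ D.frame := by
      intro hmem
      exact notMem_of_empty hd ⟨⟨le_refl _, by linarith [C.hx], le_refl _, by linarith [C.hy]⟩,
        by left; rfl⟩ hmem
    have hne : ¬((C.x1 = D.x1) ∨ (C.x1 = D.x2) ∨ (C.y1 = D.y1) ∨ (C.y1 = D.y2)) := by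
      intro hor
      exact hnotfr ⟨hc, hor⟩
    push_neg at hne
    obtain ⟨e1, e2, e3, e4⟩ := hne
    have s1 : D.x1 < C.x1 := lt_of_le_of_ne hx (Ne.symm e1)
    have s2 : C.x1 < D.x2 := lt_of_le_of_ne k1 e2
    have s3 : D.y1 < C.y1 := lt_of_le_of_ne hy (Ne.symm e3)
    have s4 : C.y1 < D.y2 := lt_of_le_of_ne (by linarith) e4
    have s5 : C.x2 < D.x2 := by
      by_contra hcon
      push_neg at hcon
      exact notMem_of_empty hd (p := (D.x2, C.y1))
        ⟨⟨by linarith, hcon, le_refl _, by linarith [C.hy]⟩, by right; right; left; rfl⟩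
        ⟨⟨by linarith [D.hx], le_refl _, by linarith, by linarith⟩, by right; left; rfl⟩
    have s6 : C.y2 < D.y2 := by
      by_contra hcon
      push_neg at hcon
      exact notMem_of_empty hd (p := (C.x1, D.y2))
        ⟨⟨le_refl _, by linarith [C.hx], by linarith, hcon⟩, by left; rfl⟩
        ⟨⟨by linarith, by linarith, by linarith [D.hy], le_refl _⟩, by right; right; right; rfl⟩
    exact ⟨s1, s5, s3, s6⟩
  rcases le_total B.x1 A.x1 with hx | hx
  · rcases le_total B.y1 A.y1 with hy | hy
    · exact Or.inl (hnest A B hdisj h1 h2 h3 h4 hx hy)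
    · exact absurd (himp A B hdisj h1 h4 hx hy) not_false
  · rcases le_total A.y1 B.y1 with hy | hy
    · exact Or.inr (hnest B A (by rw [Set.inter_comm]; exact hdisj) h2 h1 h4 h3 hx hy)
    · exact absurd (himp B A (by rw [Set.inter_comm]; exact hdisj) h2 h3 hx hy) not_false

/-- Sink lemma: two boxes crossing a common box, with disjoint frames, are nested. -/
lemma sink_nested {A B S : Box} (hA : CrossB A S) (hB : CrossB B S)
    (hdisj : A.frame ∩ B.frame = ∅) : NestedB A B ∨ NestedB B A := by
  obtain ⟨a1, a2, a3, a4, a5⟩ := hA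
  obtain ⟨b1, b2, b3, b4, b5⟩ := hB
  exact nested_or_nested hdisj (by linarith) (by linarith)
    (by linarith [S.hy]) (by linarith [S.hy])

/-- Propagation step: if `Wb` is nested in `V`, `U` crosses `Wb` (either way), and the
frames of `U` and `V` are disjoint, then `U` is nested in `V`. -/
lemma nested_step {U V Wb : Box} (hW : NestedB Wb V)
    (hcross : CrossB U Wb ∨ CrossB Wb U)
    (hdisj : U.frame ∩ V.frame = ∅) : NestedB U V := by
  obtain ⟨n1, n2, n3, n4⟩ := hW
  have hUV : NestedB U V ∨ NestedB V U := by
    rcases hcross with ⟨c1, c2, c3, c4, c5⟩ | ⟨c1, c2, c3, c4, c5⟩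
    · exact nested_or_nested hdisj (by linarith [Wb.hx]) (by linarith)
        (by linarith [Wb.hy]) (by linarith [Wb.hy, U.hy])
    · exact nested_or_nested hdisj (by linarith [U.hx]) (by linarith [Wb.hx])
        (by linarith [U.hy]) (by linarith [U.hy])
  rcases hUV with h | h
  · exact h
  · exfalso
    obtain ⟨m1, m2, m3, m4⟩ := h
    rcases hcross with ⟨c1, c2, c3, c4, c5⟩ | ⟨c1, c2, c3, c4, c5⟩
    · linarith
    · linarith

lemma nested_antisymm {A B : Box} (h1 : NestedB A B) (h2 : NestedB B A) : False := by
  obtain ⟨a1, _, _, _⟩ := h1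
  obtain ⟨b1, _, _, _⟩ := h2
  linarith

lemma nested_trans {A B C : Box} (h1 : NestedB A B) (h2 : NestedB B C) : NestedB A C := by
  obtain ⟨a1, a2, a3, a4⟩ := h1
  obtain ⟨b1, b2, b3, b4⟩ := h2
  exact ⟨by linarith, by linarith, by linarith, by linarith⟩

lemma cross_asymm {A B : Box} (h1 : CrossB A B) (h2 : CrossB B A) : False := by
  obtain ⟨a1, _, _, _⟩ := h1
  obtain ⟨b1, _, _, _⟩ := h2
  linarith

end FrameProof

namespace FrameProof
open SimpleGraph

variable {W : Type} {G : SimpleGraph W}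

/-- No triangle among the edges of a single path. -/
lemma path_no_triangle {a b : W} (p : G.Walk a b) (hp : p.IsPath) {x y z : W}
    (hxy : x ≠ y) (hyz : y ≠ z) (hxz : x ≠ z)
    (e1 : s(x, y) ∈ p.edges) (e2 : s(y, z) ∈ p.edges) (e3 : s(x, z) ∈ p.edges) : False := by
  induction p with
  | nil => simp at e1
  | cons h q ih =>
    rename_i u v ww
    rw [SimpleGraph.Walk.edges_cons, List.mem_cons] at e1 e2 e3
    have hnq : u ∉ q.support := (SimpleGraph.Walk.cons_isPath_iff _ _).1 hp |>.2
    have hq : q.IsPath := (SimpleGraph.Walk.cons_isPath_iff _ _).1 hp |>.1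
    rcases e1 with h1 | h1
    · -- {x,y} = {u,v}; then e2, e3 ∈ q.edges
      have h23 : s(y, z) ∈ q.edges ∧ s(x, z) ∈ q.edges := by
        constructor
        · rcases e2 with h2 | h2
          · exfalso; rw [Sym2.eq_iff] at h1 h2
            rcases h1 with ⟨ha,hb⟩|⟨ha,hb⟩ <;> rcases h2 with ⟨hc,hd⟩|⟨hc,hd⟩ <;> subst_vars <;>
              first | exact hxy rfl | exact hyz rfl | exact hxz rfl | exact h.ne rfl
          · exact h2
        · rcases e3 with h2 | h2
          · exfalso; rw [Sym2.eq_iff] at h1 h2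
            rcases h1 with ⟨ha,hb⟩|⟨ha,hb⟩ <;> rcases h2 with ⟨hc,hd⟩|⟨hc,hd⟩ <;> subst_vars <;>
              first | exact hxy rfl | exact hyz rfl | exact hxz rfl | exact h.ne rfl
          · exact h2
      rw [Sym2.eq_iff] at h1
      rcases h1 with ⟨hxu, _⟩ | ⟨hxv, hyu⟩
      · exact hnq (hxu ▸ q.fst_mem_support_of_mem_edges h23.2)
      · exact hnq (hyu ▸ q.fst_mem_support_of_mem_edges h23.1)
    rcases e2 with h2 | h2
    · have h13 : s(x, y) ∈ q.edges ∧ s(x, z) ∈ q.edges := by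
        constructor
        · exact h1
        · rcases e3 with h3 | h3
          · exfalso; rw [Sym2.eq_iff] at h2 h3
            rcases h2 with ⟨ha,hb⟩|⟨ha,hb⟩ <;> rcases h3 with ⟨hc,hd⟩|⟨hc,hd⟩ <;> subst_vars <;>
              first | exact hxy rfl | exact hyz rfl | exact hxz rfl | exact h.ne rfl
          · exact h3
      rw [Sym2.eq_iff] at h2
      rcases h2 with ⟨hyu, _⟩ | ⟨hyv, hzu⟩
      · exact hnq (hyu ▸ q.snd_mem_support_of_mem_edges h13.1)
      · exact hnq (hzu ▸ q.snd_mem_support_of_mem_edges h13.2)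
    rcases e3 with h3 | h3
    · rw [Sym2.eq_iff] at h3
      rcases h3 with ⟨hxu, _⟩ | ⟨hxv, hzu⟩
      · exact hnq (hxu ▸ q.fst_mem_support_of_mem_edges h1)
      · exact hnq (hzu ▸ q.snd_mem_support_of_mem_edges h2)
    · exact ih hq h1 h2 h3

/-- The unique edge-partner of the first vertex of a path. -/
lemma edge_partner_head {a b c w : W} (h : G.Adj a c) (q : G.Walk c b)
    (hp : (SimpleGraph.Walk.cons h q).IsPath)
    (hw : s(a, w) ∈ (SimpleGraph.Walk.cons h q).edges) : w = c := by
  rw [SimpleGraph.Walk.edges_cons, List.mem_cons] at hw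
  rcases hw with h1 | h1
  · rw [Sym2.eq_iff] at h1
    rcases h1 with ⟨_, h2⟩ | ⟨h2, h3⟩
    · exact h2
    · exact absurd h2 h.ne
  · exfalso
    exact ((SimpleGraph.Walk.cons_isPath_iff _ _).1 hp).2
      (q.fst_mem_support_of_mem_edges h1)

/-- The edge-partner of the first vertex of a path is unique. -/
lemma edge_partner_start_unique {c b w w' : W} (q : G.Walk c b) (hq : q.IsPath)
    (hw : s(c, w) ∈ q.edges) (hw' : s(c, w') ∈ q.edges) : w = w' := by
  cases q with
  | nil => simp at hw
  | cons h' q' =>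
    exact (edge_partner_head h' q' hq hw).trans (edge_partner_head h' q' hq hw').symm

/-- A vertex has at most two edge-partners along a path. -/
lemma edge_partner_two {a b : W} (p : G.Walk a b) (hp : p.IsPath) {x w1 w2 w3 : W}
    (e1 : s(x, w1) ∈ p.edges) (e2 : s(x, w2) ∈ p.edges) (e3 : s(x, w3) ∈ p.edges) :
    w1 = w2 ∨ w1 = w3 ∨ w2 = w3 := by
  induction p with
  | nil => simp at e1
  | cons h q ih =>
    rename_i u v ww
    have hnq : u ∉ q.support := ((SimpleGraph.Walk.cons_isPath_iff _ _).1 hp).2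
    have hq : q.IsPath := ((SimpleGraph.Walk.cons_isPath_iff _ _).1 hp).1
    have key : ∀ w' : W, s(x, w') ∈ (SimpleGraph.Walk.cons h q).edges →
        (x = u ∧ w' = v) ∨ (x = v ∧ w' = u) ∨ s(x, w') ∈ q.edges := by
      intro w' hw'
      rw [SimpleGraph.Walk.edges_cons, List.mem_cons] at hw'
      rcases hw' with h1 | h1
      · rw [Sym2.eq_iff] at h1; tauto
      · tauto
    rcases key w1 e1 with ⟨h1a, h1b⟩ | ⟨h1a, h1b⟩ | h1 <;>
      rcases key w2 e2 with ⟨h2a, h2b⟩ | ⟨h2a, h2b⟩ | h2 <;>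
        rcases key w3 e3 with ⟨h3a, h3b⟩ | ⟨h3a, h3b⟩ | h3
    all_goals first
      | exact Or.inl (h1b.trans h2b.symm)
      | exact Or.inr (Or.inl (h1b.trans h3b.symm))
      | exact Or.inr (Or.inr (h2b.trans h3b.symm))
      | exact absurd (h1a.symm.trans h2a) h.ne
      | exact absurd (h1a.symm.trans h3a) h.ne
      | exact absurd (h2a.symm.trans h3a) h.ne
      | exact absurd (h2a.symm.trans h1a) h.ne
      | exact absurd (h3a.symm.trans h1a) h.ne
      | exact absurd (h3a.symm.trans h2a) h.ne
      | exact hnq (by rw [← h1a]; exact q.fst_mem_support_of_mem_edges h2) |>.elim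
      | exact hnq (by rw [← h1a]; exact q.fst_mem_support_of_mem_edges h3) |>.elim
      | exact hnq (by rw [← h2a]; exact q.fst_mem_support_of_mem_edges h1) |>.elim
      | exact hnq (by rw [← h2a]; exact q.fst_mem_support_of_mem_edges h3) |>.elim
      | exact hnq (by rw [← h3a]; exact q.fst_mem_support_of_mem_edges h1) |>.elim
      | exact hnq (by rw [← h3a]; exact q.fst_mem_support_of_mem_edges h2) |>.elim
      | exact Or.inr (Or.inr (edge_partner_start_unique q hq (by rwa [h1a] at h2) (by rwa [h1a] at h3)))
      | exact Or.inr (Or.inl (edge_partner_start_unique q hq (by rwa [h2a] at h1) (by rwa [h2a] at h3)))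
      | exact Or.inl (edge_partner_start_unique q hq (by rwa [h3a] at h1) (by rwa [h3a] at h2))
      | exact ih hq h1 h2 h3

/-- An interior vertex of a path has two distinct edge-partners on the path. -/
lemma interior_two_partners {a b : W} (p : G.Walk a b) (hp : p.IsPath) {x : W}
    (hx : x ∈ p.support) (hxa : x ≠ a) (hxb : x ≠ b) :
    ∃ y z : W, y ≠ z ∧ s(x, y) ∈ p.edges ∧ s(x, z) ∈ p.edges ∧
      y ∈ p.support ∧ z ∈ p.support := by
  induction p with
  | nil => simp at hx; exact absurd hx hxa
  | cons h q ih =>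
    rename_i u v ww
    have hnq : u ∉ q.support := ((SimpleGraph.Walk.cons_isPath_iff _ _).1 hp).2
    have hq : q.IsPath := ((SimpleGraph.Walk.cons_isPath_iff _ _).1 hp).1
    rw [SimpleGraph.Walk.support_cons, List.mem_cons] at hx
    rcases hx with rfl | hx
    · exact absurd rfl hxa
    by_cases hxv : x = v
    · subst hxv
      cases q with
      | nil => exact absurd rfl hxb
      | cons hq' q' =>
        rename_i c
        refine ⟨u, c, ?_, ?_, ?_, ?_, ?_⟩
        · intro hh
          apply hnq
          rw [hh, SimpleGraph.Walk.support_cons]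
          exact List.mem_cons_of_mem _ (SimpleGraph.Walk.start_mem_support q')
        · rw [Sym2.eq_swap, SimpleGraph.Walk.edges_cons]
          exact List.mem_cons_self
        · rw [SimpleGraph.Walk.edges_cons, SimpleGraph.Walk.edges_cons]
          exact List.mem_cons_of_mem _ (List.mem_cons_self)
        · rw [SimpleGraph.Walk.support_cons]
          exact List.mem_cons_self
        · rw [SimpleGraph.Walk.support_cons, SimpleGraph.Walk.support_cons]
          exact List.mem_cons_of_mem _ (List.mem_cons_of_mem _
            (SimpleGraph.Walk.start_mem_support q'))
    · obtain ⟨y, z, h1, h2, h3, h4, h5⟩ := ih hq hx hxv hxb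
      refine ⟨y, z, h1, ?_, ?_, ?_, ?_⟩
      · rw [SimpleGraph.Walk.edges_cons]; exact List.mem_cons_of_mem _ h2
      · rw [SimpleGraph.Walk.edges_cons]; exact List.mem_cons_of_mem _ h3
      · rw [SimpleGraph.Walk.support_cons]; exact List.mem_cons_of_mem _ h4
      · rw [SimpleGraph.Walk.support_cons]; exact List.mem_cons_of_mem _ h5

end FrameProof

namespace FrameProof
open SimpleGraph

variable {W : Type} [DecidableEq W] {G : SimpleGraph W}

lemma take_drop_disjoint {a b : W} (p : G.Walk a b) (hp : p.IsPath) {w : W}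
    (hw : w ∈ p.support) {x : W} (hx : x ∈ (p.takeUntil w hw).support)
    (hx' : x ∈ (p.dropUntil w hw).support) : x = w := by
  have hnd : ((p.takeUntil w hw).support ++ (p.dropUntil w hw).support.tail).Nodup := by
    rw [← SimpleGraph.Walk.support_append, p.take_spec hw]
    exact hp.support_nodup
  rw [(p.dropUntil w hw).support_eq_cons, List.mem_cons] at hx'
  rcases hx' with h | h
  · exact h
  · exact absurd hx ((List.disjoint_of_nodup_append hnd).symm h)

lemma side_transfer {a b : W} (p : G.Walk a b) (hp : p.IsPath) {w : W}
    (hw : w ∈ p.support) {x y : W} (he : s(x, y) ∈ p.edges)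
    (hx : x ∉ (p.dropUntil w hw).support) : y = w ∨ y ∉ (p.dropUntil w hw).support := by
  have he' : s(x, y) ∈ (p.takeUntil w hw).edges ∨ s(x, y) ∈ (p.dropUntil w hw).edges := by
    rw [← List.mem_append, ← SimpleGraph.Walk.edges_append, p.take_spec hw]
    exact he
  rcases he' with h | h
  · by_cases hy : y ∈ (p.dropUntil w hw).support
    · exact Or.inl (take_drop_disjoint p hp hw ((p.takeUntil w hw).snd_mem_support_of_mem_edges h) hy)
    · exact Or.inr hy
  · exact absurd ((p.dropUntil w hw).fst_mem_support_of_mem_edges h) hx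

lemma side_transfer' {a b : W} (p : G.Walk a b) (hp : p.IsPath) {w : W}
    (hw : w ∈ p.support) {x y : W} (he : s(x, y) ∈ p.edges)
    (hx : x ∉ (p.takeUntil w hw).support) : y = w ∨ y ∉ (p.takeUntil w hw).support := by
  have he' : s(x, y) ∈ (p.takeUntil w hw).edges ∨ s(x, y) ∈ (p.dropUntil w hw).edges := by
    rw [← List.mem_append, ← SimpleGraph.Walk.edges_append, p.take_spec hw]
    exact he
  rcases he' with h | h
  · exact absurd ((p.takeUntil w hw).fst_mem_support_of_mem_edges h) hx
  · by_cases hy : y ∈ (p.takeUntil w hw).support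
    · exact Or.inl (take_drop_disjoint p hp hw hy ((p.dropUntil w hw).snd_mem_support_of_mem_edges h))
    · exact Or.inr hy

/-- Reachability avoiding a set of vertices. -/
def ReachAvoid (G : SimpleGraph W) (B : Set W) (u v : W) : Prop :=
  ∃ p : G.Walk u v, ∀ x ∈ p.support, x ∉ B

lemma ReachAvoid.refl (B : Set W) {u : W} (hu : u ∉ B) : ReachAvoid G B u u :=
  ⟨SimpleGraph.Walk.nil, by intro x hx; rw [SimpleGraph.Walk.support_nil, List.mem_singleton] at hx; rwa [hx]⟩

lemma ReachAvoid.symm {B : Set W} {u v : W} (h : ReachAvoid G B u v) : ReachAvoid G B v u := by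
  obtain ⟨p, hp⟩ := h
  exact ⟨p.reverse, by intro x hx; rw [SimpleGraph.Walk.support_reverse, List.mem_reverse] at hx; exact hp x hx⟩

lemma ReachAvoid.trans {B : Set W} {u v x : W} (h1 : ReachAvoid G B u v)
    (h2 : ReachAvoid G B v x) : ReachAvoid G B u x := by
  obtain ⟨p, hp⟩ := h1
  obtain ⟨q, hq⟩ := h2
  refine ⟨p.append q, ?_⟩
  intro y hy
  rw [SimpleGraph.Walk.mem_support_append_iff] at hy
  rcases hy with h | h
  · exact hp y h
  · exact hq y h

/-- Escape along a path, avoiding a chained set of blockers. -/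
lemma escape_blocks {a b : W} (p : G.Walk a b) (hp : p.IsPath) {w : W}
    (hw : w ∈ p.support) (B : Set W) (hwB : w ∉ B) (L : List W)
    (hsub : ∀ x, x ∈ B → x ∈ p.support → x ∈ L)
    (hLB : ∀ z ∈ L, z ∈ B)
    (hchain : L.Chain' (fun x y => s(x, y) ∈ p.edges)) :
    ∃ e, e ∉ B ∧ ReachAvoid G B w e ∧ (e = a ∨ e = b) := by
  classical
  have escape_fwd : (∀ z ∈ L, z ∉ (p.dropUntil w hw).support) →
      ∃ e, e ∉ B ∧ ReachAvoid G B w e ∧ (e = a ∨ e = b) := by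
    intro hall
    have hbB : b ∉ B := by
      intro hb
      exact hall b (hsub b hb (p.end_mem_support)) ((p.dropUntil w hw).end_mem_support)
    refine ⟨b, hbB, ⟨p.dropUntil w hw, ?_⟩, Or.inr rfl⟩
    intro x hx hxB
    exact hall x (hsub x hxB (p.support_dropUntil_subset hw hx)) hx
  have escape_bwd : (∀ z ∈ L, z ∉ (p.takeUntil w hw).support) →
      ∃ e, e ∉ B ∧ ReachAvoid G B w e ∧ (e = a ∨ e = b) := by
    intro hall
    have haB : a ∉ B := by
      intro ha
      exact hall a (hsub a ha (p.start_mem_support)) ((p.takeUntil w hw).start_mem_support)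
    refine ⟨a, haB, ⟨(p.takeUntil w hw).reverse, ?_⟩, Or.inl rfl⟩
    intro x hx hxB
    rw [SimpleGraph.Walk.support_reverse, List.mem_reverse] at hx
    exact hall x (hsub x hxB (p.support_takeUntil_subset hw hx)) hx
  have chain_prop : ∀ (L' : List W) (c : W) (Q : W → Prop),
      (∀ x y, y ∈ c :: L' → s(x, y) ∈ p.edges → Q x → Q y) →
      (c :: L').Chain' (fun x y => s(x, y) ∈ p.edges) → Q c → ∀ z ∈ c :: L', Q z := by
    intro L'
    induction L' with
    | nil =>
      intro c Q _ _ hc z hz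
      rw [List.mem_singleton] at hz
      exact hz ▸ hc
    | cons d L'' ih =>
      intro c Q hstep hch hc z hz
      rcases List.mem_cons.1 hz with rfl | hz
      · exact hc
      · refine ih d Q (fun x y hy he hx => hstep x y (List.mem_cons_of_mem _ hy) he hx)
          (List.isChain_cons_cons.1 hch).2
          (hstep c d (List.mem_cons_of_mem _ (List.mem_cons_self)) (List.isChain_cons_cons.1 hch).1 hc) z hz
  cases L with
  | nil => exact escape_fwd (by intro z hz; simp at hz)
  | cons c L' =>
    by_cases hc : c ∈ (p.dropUntil w hw).support
    · -- all blockers are on the drop side; escape backward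
      apply escape_bwd
      have hstart : c ∉ (p.takeUntil w hw).support := by
        intro hmem
        exact hwB ((take_drop_disjoint p hp hw hmem hc) ▸ hLB c (List.mem_cons_self))
      refine chain_prop L' c (fun z => z ∉ (p.takeUntil w hw).support) ?_ hchain hstart
      intro x y hy he hx
      rcases side_transfer' p hp hw he hx with h | h
      · exact absurd (h ▸ hLB y hy) hwB
      · exact h
    · -- all blockers are on the take side; escape forward
      apply escape_fwd
      refine chain_prop L' c (fun z => z ∉ (p.dropUntil w hw).support) ?_ hchain hc
      intro x y hy he hx
      rcases side_transfer p hp hw he hx with h | h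
      · exact absurd (h ▸ hLB y hy) hwB
      · exact h

end FrameProof


namespace FrameProof
open SimpleGraph

variable {W : Type} [DecidableEq W] {H : SimpleGraph W}

/-- Multiplicity in the multigraph of `K₄` for distinct vertices. -/
lemma m_eq {u v : Fin 4} (h : u ≠ v) :
    (⊤ : SimpleGraph (Fin 4)).toMultigraph.m u v = 1 := by
  simp only [SimpleGraph.toMultigraph]
  rw [if_pos (by simpa using h : (⊤ : SimpleGraph (Fin 4)).Adj u v)]

lemma ne_of_idx {u v : Fin 4} (i : Fin ((⊤ : SimpleGraph (Fin 4)).toMultigraph.m u v)) :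
    u ≠ v := by
  intro h
  subst h
  have h2 : 0 < (⊤ : SimpleGraph (Fin 4)).toMultigraph.m u u :=
    lt_of_le_of_lt (Nat.zero_le _) i.isLt
  rw [(⊤ : SimpleGraph (Fin 4)).toMultigraph.loopless u] at h2
  exact lt_irrefl 0 h2

variable (S : MultiSubdivision (⊤ : SimpleGraph (Fin 4)).toMultigraph H 1)

/-- The canonical index. -/
def pIdx {u v : Fin 4} (h : u ≠ v) : Fin ((⊤ : SimpleGraph (Fin 4)).toMultigraph.m u v) :=
  ⟨0, by rw [m_eq h]; norm_num⟩

lemma idx_eq {u v : Fin 4} (h : u ≠ v)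
    (i : Fin ((⊤ : SimpleGraph (Fin 4)).toMultigraph.m u v)) : i = pIdx h := by
  apply Fin.ext
  have h2 := i.isLt
  have hm := m_eq h
  simp only [pIdx]
  omega

/-- The canonical path between two distinct branch vertices. -/
def Pth {u v : Fin 4} (h : u ≠ v) : H.Walk (S.f u) (S.f v) := S.path u v (pIdx h)

lemma Pth_isPath {u v : Fin 4} (h : u ≠ v) : (Pth S h).IsPath := S.isPath u v (pIdx h)

lemma Pth_len {u v : Fin 4} (h : u ≠ v) : 2 ≤ (Pth S h).length := S.length_le u v (pIdx h)

lemma Pth_rev {u v : Fin 4} (h : u ≠ v) : Pth S h.symm = (Pth S h).reverse := by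
  have h2 := S.path_symm u v (pIdx h)
  rw [idx_eq h.symm (Fin.cast ((⊤ : SimpleGraph (Fin 4)).toMultigraph.symm u v) (pIdx h))] at h2
  exact h2

lemma interior_carrier {u v u' v' : Fin 4} (h : u ≠ v) (h' : u' ≠ v') {x : W}
    (hx : x ∈ walkInterior (Pth S h)) (hx' : x ∈ walkInterior (Pth S h')) :
    (u = u' ∧ v = v') ∨ (u = v' ∧ v = u') := by
  have h2 := S.interior_disjoint u v (pIdx h) u' v' (pIdx h') ⟨x, hx, hx'⟩
  rcases h2 with ⟨a, b, _⟩ | ⟨a, b, _⟩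
  · exact Or.inl ⟨a, b⟩
  · exact Or.inr ⟨a, b⟩

lemma interior_not_f {u v : Fin 4} (h : u ≠ v) {x : W}
    (hx : x ∈ walkInterior (Pth S h)) (t : Fin 4) : x ≠ S.f t := by
  intro he
  exact S.interior_avoid u v (pIdx h) t (he ▸ hx)

lemma mem_supp_cases {u v : Fin 4} (h : u ≠ v) {x : W}
    (hx : x ∈ (Pth S h).support) :
    x = S.f u ∨ x = S.f v ∨ x ∈ walkInterior (Pth S h) := by
  by_cases h1 : x = S.f u
  · exact Or.inl h1
  by_cases h2 : x = S.f v
  · exact Or.inr (Or.inl h2)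
  · exact Or.inr (Or.inr ⟨hx, h1, h2⟩)

/-- An interior vertex of one path is not on a path with a different vertex pair. -/
lemma interior_not_elsewhere {u v u' v' : Fin 4} (h : u ≠ v) (h' : u' ≠ v') {x : W}
    (hx : x ∈ walkInterior (Pth S h))
    (hne : ¬((u = u' ∧ v = v') ∨ (u = v' ∧ v = u'))) :
    x ∉ (Pth S h').support := by
  intro hmem
  rcases mem_supp_cases S h' hmem with h1 | h1 | h1
  · exact interior_not_f S h hx u' h1
  · exact interior_not_f S h hx v' h1
  · exact hne (interior_carrier S h h' hx h1)

lemma vclass (w : W) : (∃ t, w = S.f t) ∨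
    ∃ (u v : Fin 4) (h : u ≠ v), w ∈ walkInterior (Pth S h) := by
  rcases S.vertex_cover w with ⟨t, ht⟩ | ⟨u, v, i, hi⟩
  · exact Or.inl ⟨t, ht.symm⟩
  · have hne := ne_of_idx i
    rw [idx_eq hne i] at hi
    exact Or.inr ⟨u, v, hne, hi⟩

lemma edge_carrier {x y : W} (hxy : H.Adj x y) :
    ∃ (u v : Fin 4) (h : u ≠ v), s(x, y) ∈ (Pth S h).edges := by
  obtain ⟨u, v, i, hi⟩ := S.edge_cover s(x, y) hxy
  have hne := ne_of_idx i
  rw [idx_eq hne i] at hi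
  exact ⟨u, v, hne, hi⟩

/-- The second vertex of a canonical path. -/
lemma exists_second {u v : Fin 4} (h : u ≠ v) :
    ∃ c : W, H.Adj (S.f u) c ∧ s(S.f u, c) ∈ (Pth S h).edges ∧
      c ∈ walkInterior (Pth S h) ∧
      (∀ z, s(S.f u, z) ∈ (Pth S h).edges → z = c) := by
  have hlen := Pth_len S h
  have hpath := Pth_isPath S h
  have hnil : ¬(Pth S h).Nil := by
    rw [SimpleGraph.Walk.nil_iff_length_eq]
    omega
  obtain ⟨c, hadj, q, hq⟩ := SimpleGraph.Walk.not_nil_iff.1 hnil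
  rw [hq] at hlen hpath
  
  have hcint : c ≠ S.f v := by
    intro he
    subst he
    have : q.IsPath := ((SimpleGraph.Walk.cons_isPath_iff _ _).1 hpath).1
    rw [SimpleGraph.Walk.isPath_iff_eq_nil] at this
    rw [this] at hlen
    simp at hlen
  refine ⟨c, hadj, ?_, ⟨?_, hadj.ne', hcint⟩, ?_⟩
  · rw [hq, SimpleGraph.Walk.edges_cons]; exact List.mem_cons_self
  · rw [hq, SimpleGraph.Walk.support_cons]
    exact List.mem_cons_of_mem _ q.start_mem_support
  · intro z hz
    rw [hq] at hz
    exact edge_partner_head hadj q hpath hz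

/-- No two branch vertices are adjacent. -/
lemma branch_not_adj (i j : Fin 4) : ¬ H.Adj (S.f i) (S.f j) := by
  intro hadj
  obtain ⟨u, v, huv, he⟩ := edge_carrier S hadj
  have hi : S.f i ∈ (Pth S huv).support := (Pth S huv).fst_mem_support_of_mem_edges he
  have hiuv : S.f i = S.f u ∨ S.f i = S.f v := by
    rcases mem_supp_cases S huv hi with h | h | h
    · exact Or.inl h
    · exact Or.inr h
    · exact absurd rfl (interior_not_f S huv h i)
  have key : ∀ (a b : Fin 4) (hab : a ≠ b), s(S.f a, S.f j) ∈ (Pth S hab).edges → False := by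
    intro a b hab hmem
    obtain ⟨c, _, _, hcint, huniq⟩ := exists_second S hab
    exact interior_not_f S hab hcint j (huniq (S.f j) hmem).symm
  rcases hiuv with h | h
  · have h2 : i = u := S.f.injective h
    subst h2
    exact key i v huv he
  · have h2 : i = v := S.f.injective h
    subst h2
    apply key i u huv.symm
    rw [Pth_rev, SimpleGraph.Walk.edges_reverse, List.mem_reverse]
    exact he

/-- Every edge at an interior vertex lies on its carrier path. -/
lemma interior_adj_on_carrier {u v : Fin 4} (h : u ≠ v) {m : W}
    (hm : m ∈ walkInterior (Pth S h)) {z : W} (hz : H.Adj m z) :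
    s(m, z) ∈ (Pth S h).edges := by
  obtain ⟨u', v', h', he⟩ := edge_carrier S hz
  have hmm : m ∈ (Pth S h').support := (Pth S h').fst_mem_support_of_mem_edges he
  have hint : m ∈ walkInterior (Pth S h') := by
    rcases mem_supp_cases S h' hmm with h1 | h1 | h1
    · exact absurd h1 (interior_not_f S h hm u')
    · exact absurd h1 (interior_not_f S h hm v')
    · exact h1
  rcases interior_carrier S h' h hint hm with ⟨rfl, rfl⟩ | ⟨rfl, rfl⟩
  · exact he
  · have : Pth S h' = (Pth S h).reverse := Pth_rev S h
    rw [this, SimpleGraph.Walk.edges_reverse, List.mem_reverse] at he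
    exact he

/-- Every neighbor of a branch vertex is the second vertex of a path there. -/
lemma branch_adj_second (t : Fin 4) {z : W} (hz : H.Adj (S.f t) z) :
    ∃ (d : Fin 4) (hd : t ≠ d), s(S.f t, z) ∈ (Pth S hd).edges ∧
      z ∈ walkInterior (Pth S hd) := by
  obtain ⟨u, v, huv, he⟩ := edge_carrier S hz
  have ht : S.f t ∈ (Pth S huv).support := (Pth S huv).fst_mem_support_of_mem_edges he
  have htuv : S.f t = S.f u ∨ S.f t = S.f v := by
    rcases mem_supp_cases S huv ht with h | h | h
    · exact Or.inl h
    · exact Or.inr h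
    · exact absurd rfl (interior_not_f S huv h t)
  have hinj : ∀ a b : Fin 4, S.f a = S.f b → a = b := fun a b hab => S.f.injective hab
  rcases htuv with h | h
  · have h2 : t = u := hinj t u h
    subst h2
    refine ⟨v, huv, he, ?_⟩
    obtain ⟨c, _, _, hcint, huniq⟩ := exists_second S huv
    rw [huniq z he]
    exact hcint
  · have h2 : t = v := hinj t v h
    subst h2
    refine ⟨u, huv.symm, ?_, ?_⟩
    · rw [Pth_rev, SimpleGraph.Walk.edges_reverse, List.mem_reverse]; exact he
    · obtain ⟨c, _, _, hcint, huniq⟩ := exists_second S huv.symm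
      have he' : s(S.f t, z) ∈ (Pth S huv.symm).edges := by
        rw [Pth_rev, SimpleGraph.Walk.edges_reverse, List.mem_reverse]; exact he
      rw [huniq z he']
      exact hcint

/-- The two path-neighbors of an interior vertex; they are its only neighbors. -/
lemma interior_nbrs {u v : Fin 4} (h : u ≠ v) {m : W}
    (hm : m ∈ walkInterior (Pth S h)) :
    ∃ pm nm : W, pm ≠ nm ∧ s(m, pm) ∈ (Pth S h).edges ∧ s(m, nm) ∈ (Pth S h).edges ∧
      pm ∈ (Pth S h).support ∧ nm ∈ (Pth S h).support ∧
      H.Adj m pm ∧ H.Adj m nm ∧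
      (∀ z, H.Adj m z → z = pm ∨ z = nm) := by
  obtain ⟨hsupp, hne1, hne2⟩ := id hm
  obtain ⟨pm, nm, h1, h2, h3, h4, h5⟩ :=
    interior_two_partners (Pth S h) (Pth_isPath S h) hsupp hne1 hne2
  have hadj1 : H.Adj m pm := (Pth S h).adj_of_mem_edges h2
  have hadj2 : H.Adj m nm := (Pth S h).adj_of_mem_edges h3
  refine ⟨pm, nm, h1, h2, h3, h4, h5, hadj1, hadj2, ?_⟩
  intro z hz
  have hze : s(m, z) ∈ (Pth S h).edges := interior_adj_on_carrier S h hm hz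
  rcases edge_partner_two (Pth S h) (Pth_isPath S h) h2 h3 hze with h' | h' | h'
  · exact absurd h' h1
  · exact Or.inl h'.symm
  · exact Or.inr h'.symm

include S in
/-- The subdivision is triangle-free. -/
lemma no_triangle {x y z : W} (h1 : H.Adj x y) (h2 : H.Adj y z) (h3 : H.Adj x z) :
    False := by
  -- at most one of x, y, z is a branch vertex, so one of them, adjacent to the
  -- two others, is interior; all three edges then lie on its carrier path.
  have main : ∀ a b c : W, H.Adj a b → H.Adj a c → H.Adj b c →
      (∃ (u v : Fin 4) (huv : u ≠ v), a ∈ walkInterior (Pth S huv)) → False := by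
    intro a b c hab hac hbc ⟨u, v, huv, ha⟩
    have eab : s(a, b) ∈ (Pth S huv).edges := interior_adj_on_carrier S huv ha hab
    have eac : s(a, c) ∈ (Pth S huv).edges := interior_adj_on_carrier S huv ha hac
    -- b or c is interior of the same path, giving the third edge on it
    have hbsupp : b ∈ (Pth S huv).support := (Pth S huv).snd_mem_support_of_mem_edges eab
    have hcsupp : c ∈ (Pth S huv).support := (Pth S huv).snd_mem_support_of_mem_edges eac
    have hbc' : s(b, c) ∈ (Pth S huv).edges := by
      rcases mem_supp_cases S huv hbsupp with rfl | rfl | h'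
      · rcases mem_supp_cases S huv hcsupp with rfl | rfl | h''
        · exact absurd hbc (branch_not_adj S u u)
        · exact absurd hbc (branch_not_adj S u v)
        · rw [Sym2.eq_swap]; exact interior_adj_on_carrier S huv h'' hbc.symm
      · rcases mem_supp_cases S huv hcsupp with rfl | rfl | h''
        · exact absurd hbc (branch_not_adj S v u)
        · exact absurd hbc (branch_not_adj S v v)
        · rw [Sym2.eq_swap]; exact interior_adj_on_carrier S huv h'' hbc.symm
      · exact interior_adj_on_carrier S huv h' hbc
    exact path_no_triangle (Pth S huv) (Pth_isPath S huv) hab.ne hbc.ne hac.ne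
      eab hbc' eac
  -- find an interior center
  rcases vclass S y with ⟨t, rfl⟩ | hy
  · rcases vclass S x with ⟨t', rfl⟩ | hx
    · exact branch_not_adj S t' t h1
    · exact main x (S.f t) z h1 h3 h2 hx
  · exact main y x z h1.symm h2 h3 hy


end FrameProof

namespace FrameProof
open SimpleGraph

variable {W : Type} [DecidableEq W] {H : SimpleGraph W}
variable (S : MultiSubdivision (⊤ : SimpleGraph (Fin 4)).toMultigraph H 1)

/-- The closed neighborhood as a set. -/
def closedNb (H : SimpleGraph W) (m : W) : Set W := {x | x = m ∨ H.Adj m x}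

lemma fin4_third : ∀ a b : Fin 4, ∃ g : Fin 4, g ≠ a ∧ g ≠ b := by decide

lemma fin4_pairs : ∀ a b u v x0 y0 : Fin 4, a ≠ b → x0 ≠ y0 → u ≠ v →
    (a = x0 ∨ a = y0) → (b = x0 ∨ b = y0) → (a = u ∨ a = v) → (b = u ∨ b = v) →
    (x0 = u ∧ y0 = v) ∨ (x0 = v ∧ y0 = u) := by decide

lemma f_mem_supp {u v : Fin 4} (huv : u ≠ v) {a : Fin 4}
    (h : S.f a ∈ (Pth S huv).support) : a = u ∨ a = v := by
  rcases mem_supp_cases S huv h with h1 | h1 | h1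
  · exact Or.inl (S.f.injective h1)
  · exact Or.inr (S.f.injective h1)
  · exact absurd rfl (interior_not_f S huv h1 a)

include S in
/-- Connectivity of the subdivision minus a closed neighborhood. -/
lemma conn (m : W) {w1 w2 : W} (h1 : w1 ∉ closedNb H m) (h2 : w2 ∉ closedNb H m) :
    ReachAvoid H (closedNb H m) w1 w2 := by
  set B : Set W := closedNb H m with hB
  have hmB : m ∈ B := Or.inl rfl
  rcases vclass S m with ⟨t, rfl⟩ | ⟨x0, y0, h0, hm⟩
  · -- the removed vertex is a branch vertex
    have hBchar : ∀ x ∈ B, x = S.f t ∨ ∃ (d : Fin 4) (hd : t ≠ d),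
        x ∈ walkInterior (Pth S hd) ∧ s(S.f t, x) ∈ (Pth S hd).edges := by
      intro x hx
      rcases hx with rfl | hadj
      · exact Or.inl rfl
      · obtain ⟨d, hd, he, hint⟩ := branch_adj_second S t hadj
        exact Or.inr ⟨d, hd, hint, he⟩
    have escape : ∀ w, w ∉ B → ∃ r, S.f r ∉ B ∧ ReachAvoid H B w (S.f r) := by
      intro w hwB
      rcases vclass S w with ⟨r, rfl⟩ | ⟨u, v, huv, hwint⟩
      · exact ⟨r, hwB, ReachAvoid.refl _ hwB⟩
      obtain ⟨sec, hsadj, hsedge, hsint, hsuniq⟩ := exists_second S huv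
      obtain ⟨sec', hsadj', hsedge', hsint', hsuniq'⟩ := exists_second S huv.symm
      have hrun : ∀ L : List W, (∀ x, x ∈ B → x ∈ (Pth S huv).support → x ∈ L) →
          (∀ z ∈ L, z ∈ B) → L.Chain' (fun x y => s(x, y) ∈ (Pth S huv).edges) →
          ∃ r, S.f r ∉ B ∧ ReachAvoid H B w (S.f r) := by
        intro L hsub hLB hchain
        obtain ⟨e, heB, hre, he | he⟩ :=
          escape_blocks (Pth S huv) (Pth_isPath S huv) hwint.1 B hwB L hsub hLB hchain
        · exact ⟨u, he ▸ heB, he ▸ hre⟩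
        · exact ⟨v, he ▸ heB, he ▸ hre⟩
      by_cases htu : t = u
      · subst htu
        refine hrun [S.f t, sec] ?_ ?_ ?_
        · intro x hx hxs
          rcases hBchar x hx with rfl | ⟨d, hd, hint, hedge⟩
          · simp
          · have hxint : x ∈ walkInterior (Pth S huv) := by
              rcases mem_supp_cases S huv hxs with h' | h' | h'
              · exact absurd h' (interior_not_f S hd hint t)
              · exact absurd h' (interior_not_f S hd hint v)
              · exact h'
            rcases interior_carrier S hd huv hint hxint with ⟨_, rfl⟩ | ⟨h', _⟩
            · have : x = sec := hsuniq x hedge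
              simp [this]
            · exact absurd h' huv
        · intro z hz
          rcases List.mem_cons.1 hz with rfl | hz
          · exact hmB
          · rw [List.mem_singleton] at hz
            exact hz ▸ Or.inr hsadj
        · exact List.isChain_cons_cons.2 ⟨hsedge, List.isChain_singleton _⟩
      · by_cases htv : t = v
        · subst htv
          have hsedge'' : s(S.f t, sec') ∈ (Pth S huv).edges := by
            have h' := hsedge'
            rw [Pth_rev S huv, SimpleGraph.Walk.edges_reverse, List.mem_reverse] at h'
            exact h'
          refine hrun [S.f t, sec'] ?_ ?_ ?_
          · intro x hx hxs
            rcases hBchar x hx with rfl | ⟨d, hd, hint, hedge⟩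
            · simp
            · have hxint : x ∈ walkInterior (Pth S huv) := by
                rcases mem_supp_cases S huv hxs with h' | h' | h'
                · exact absurd h' (interior_not_f S hd hint u)
                · exact absurd h' (interior_not_f S hd hint t)
                · exact h'
              rcases interior_carrier S hd huv hint hxint with ⟨h', _⟩ | ⟨_, rfl⟩
              · exact absurd h' htu
              · have : x = sec' := hsuniq' x hedge
                simp [this]
          · intro z hz
            rcases List.mem_cons.1 hz with rfl | hz
            · exact hmB
            · rw [List.mem_singleton] at hz
              exact hz ▸ Or.inr hsadj'
          · exact List.isChain_cons_cons.2 ⟨hsedge'', List.isChain_singleton _⟩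
        · refine hrun [] ?_ (by simp) (List.isChain_nil)
          intro x hx hxs
          exfalso
          rcases hBchar x hx with rfl | ⟨d, hd, hint, hedge⟩
          · rcases f_mem_supp S huv hxs with h' | h'
            · exact htu h'
            · exact htv h'
          · have hxint : x ∈ walkInterior (Pth S huv) := by
              rcases mem_supp_cases S huv hxs with h' | h' | h'
              · exact absurd h' (interior_not_f S hd hint u)
              · exact absurd h' (interior_not_f S hd hint v)
              · exact h'
            rcases interior_carrier S hd huv hint hxint with ⟨h', _⟩ | ⟨h', _⟩
            · exact htu h'
            · exact htv h'
    have connect : ∀ r1 r2 : Fin 4, S.f r1 ∉ B → S.f r2 ∉ B →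
        ReachAvoid H B (S.f r1) (S.f r2) := by
      intro r1 r2 hr1 hr2
      by_cases hr12 : r1 = r2
      · exact hr12 ▸ ReachAvoid.refl _ hr1
      refine ⟨Pth S hr12, ?_⟩
      intro z hz hzB
      rcases hBchar z hzB with rfl | ⟨d, hd, hint, hedge⟩
      · rcases f_mem_supp S hr12 hz with h' | h'
        · exact hr1 (h' ▸ hzB)
        · exact hr2 (h' ▸ hzB)
      · have hzint : z ∈ walkInterior (Pth S hr12) := by
          rcases mem_supp_cases S hr12 hz with h' | h' | h'
          · exact absurd h' (interior_not_f S hd hint r1)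
          · exact absurd h' (interior_not_f S hd hint r2)
          · exact h'
        rcases interior_carrier S hd hr12 hint hzint with ⟨h', _⟩ | ⟨h', _⟩
        · exact hr1 (h' ▸ hmB)
        · exact hr2 (h' ▸ hmB)
    obtain ⟨r1, hr1, hre1⟩ := escape w1 h1
    obtain ⟨r2, hr2, hre2⟩ := escape w2 h2
    exact (hre1.trans (connect r1 r2 hr1 hr2)).trans hre2.symm
  · -- the removed vertex is interior to the path between x0 and y0
    obtain ⟨pm, nm, hpnm, hep, hen, hpsupp, hnsupp, hadjp, hadjn, huniq⟩ :=
      interior_nbrs S h0 hm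
    have hBsub : ∀ x ∈ B, x = m ∨ x = pm ∨ x = nm := by
      intro x hx
      rcases hx with rfl | hadj
      · exact Or.inl rfl
      · rcases huniq x hadj with h' | h'
        · exact Or.inr (Or.inl h')
        · exact Or.inr (Or.inr h')
    have hpmB : pm ∈ B := Or.inr hadjp
    have hnmB : nm ∈ B := Or.inr hadjn
    -- membership of B elements in another path's support
    have hclean : ∀ (c d : Fin 4) (hcd : c ≠ d),
        ¬((x0 = c ∧ y0 = d) ∨ (x0 = d ∧ y0 = c)) →
        S.f c ∉ B → S.f d ∉ B → ∀ z ∈ (Pth S hcd).support, z ∉ B := by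
      intro c d hcd hpair hc hd z hz hzB
      have key : ∀ x : W, x ∈ B → x ∈ (Pth S h0).support → x ∉ (Pth S hcd).support := by
        intro x hxB hxs hxs'
        rcases mem_supp_cases S h0 hxs with h' | h' | h'
        · rcases f_mem_supp S hcd (h' ▸ hxs') with h'' | h''
          · exact hc ((h'' ▸ h' : x = S.f c) ▸ hxB)
          · exact hd ((h'' ▸ h' : x = S.f d) ▸ hxB)
        · rcases f_mem_supp S hcd (h' ▸ hxs') with h'' | h''
          · exact hc ((h'' ▸ h' : x = S.f c) ▸ hxB)
          · exact hd ((h'' ▸ h' : x = S.f d) ▸ hxB)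
        · exact interior_not_elsewhere S h0 hcd h' hpair hxs'
      rcases hBsub z hzB with rfl | rfl | rfl
      · exact key z hzB hm.1 hz
      · exact key z hzB hpsupp hz
      · exact key z hzB hnsupp hz
    have hfg_notB : ∀ g : Fin 4, g ≠ x0 → g ≠ y0 → S.f g ∉ B := by
      intro g hg1 hg2 hgB
      have key : ∀ x : W, x ∈ B → x ∈ (Pth S h0).support → x = S.f g → False := by
        intro x hxB hxs hxg
        subst hxg
        rcases f_mem_supp S h0 hxs with h' | h'
        · exact hg1 h'
        · exact hg2 h'
      rcases hBsub _ hgB with h' | h' | h'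
      · exact key (S.f g) hgB (by rw [h']; exact hm.1) rfl
      · exact key (S.f g) hgB (h' ▸ hpsupp) rfl
      · exact key (S.f g) hgB (h' ▸ hnsupp) rfl
    have escape : ∀ w, w ∉ B → ∃ r, S.f r ∉ B ∧ ReachAvoid H B w (S.f r) := by
      intro w hwB
      rcases vclass S w with ⟨r, rfl⟩ | ⟨u, v, huv, hwint⟩
      · exact ⟨r, hwB, ReachAvoid.refl _ hwB⟩
      have hrun : ∀ L : List W, (∀ x, x ∈ B → x ∈ (Pth S huv).support → x ∈ L) →
          (∀ z ∈ L, z ∈ B) → L.Chain' (fun x y => s(x, y) ∈ (Pth S huv).edges) →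
          ∃ r, S.f r ∉ B ∧ ReachAvoid H B w (S.f r) := by
        intro L hsub hLB hchain
        obtain ⟨e, heB, hre, he | he⟩ :=
          escape_blocks (Pth S huv) (Pth_isPath S huv) hwint.1 B hwB L hsub hLB hchain
        · exact ⟨u, he ▸ heB, he ▸ hre⟩
        · exact ⟨v, he ▸ heB, he ▸ hre⟩
      by_cases hpair : (x0 = u ∧ y0 = v) ∨ (x0 = v ∧ y0 = u)
      · -- same carrier
        have hedges : s(pm, m) ∈ (Pth S huv).edges ∧ s(m, nm) ∈ (Pth S huv).edges := by
          rcases hpair with ⟨he1, he2⟩ | ⟨he1, he2⟩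
          · subst he1; subst he2
            exact ⟨Sym2.eq_swap ▸ hep, hen⟩
          · subst he1; subst he2
            constructor
            · show s(pm, m) ∈ (Pth S h0.symm).edges
              rw [Pth_rev S h0, SimpleGraph.Walk.edges_reverse, List.mem_reverse]
              exact Sym2.eq_swap ▸ hep
            · show s(m, nm) ∈ (Pth S h0.symm).edges
              rw [Pth_rev S h0, SimpleGraph.Walk.edges_reverse, List.mem_reverse]
              exact hen
        refine hrun [pm, m, nm] ?_ ?_ ?_
        · intro x hx _
          rcases hBsub x hx with rfl | rfl | rfl <;> simp
        · intro z hz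
          rcases List.mem_cons.1 hz with rfl | hz
          · exact hpmB
          rcases List.mem_cons.1 hz with rfl | hz
          · exact hmB
          rw [List.mem_singleton] at hz
          exact hz ▸ hnmB
        · exact List.isChain_cons_cons.2 ⟨hedges.1,
            List.isChain_cons_cons.2 ⟨hedges.2, List.isChain_singleton _⟩⟩
      · -- different carrier: at most one of pm, nm can be on this path
        have hmns : m ∉ (Pth S huv).support :=
          interior_not_elsewhere S h0 huv hm hpair
      -- at most one of pm, nm is on the path
        have honeside : ¬(pm ∈ (Pth S huv).support ∧ nm ∈ (Pth S huv).support) := by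
          rintro ⟨hp', hn'⟩
          -- both are branch vertices then
          have hpm_br : ∃ a, pm = S.f a ∧ (a = x0 ∨ a = y0) ∧ (a = u ∨ a = v) := by
            rcases mem_supp_cases S h0 hpsupp with h' | h' | h'
            · exact ⟨x0, h', Or.inl rfl, f_mem_supp S huv (h' ▸ hp')⟩
            · exact ⟨y0, h', Or.inr rfl, f_mem_supp S huv (h' ▸ hp')⟩
            · exact absurd hp' (interior_not_elsewhere S h0 huv h' hpair)
          have hnm_br : ∃ a, nm = S.f a ∧ (a = x0 ∨ a = y0) ∧ (a = u ∨ a = v) := by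
            rcases mem_supp_cases S h0 hnsupp with h' | h' | h'
            · exact ⟨x0, h', Or.inl rfl, f_mem_supp S huv (h' ▸ hn')⟩
            · exact ⟨y0, h', Or.inr rfl, f_mem_supp S huv (h' ▸ hn')⟩
            · exact absurd hn' (interior_not_elsewhere S h0 huv h' hpair)
          obtain ⟨a, rfl, ha1, ha2⟩ := hpm_br
          obtain ⟨b, rfl, hb1, hb2⟩ := hnm_br
          have hab : a ≠ b := fun h' => hpnm (h' ▸ rfl)
          exact hpair (fin4_pairs a b u v x0 y0 hab h0 huv ha1 hb1 ha2 hb2)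
        by_cases hpms : pm ∈ (Pth S huv).support
        · refine hrun [pm] ?_ ?_ (List.isChain_singleton _)
          · intro x hx hxs
            rcases hBsub x hx with rfl | rfl | rfl
            · exact absurd hxs hmns
            · simp
            · exact absurd ⟨hpms, hxs⟩ honeside
          · intro z hz
            rw [List.mem_singleton] at hz
            exact hz ▸ hpmB
        · by_cases hnms : nm ∈ (Pth S huv).support
          · refine hrun [nm] ?_ ?_ (List.isChain_singleton _)
            · intro x hx hxs
              rcases hBsub x hx with rfl | rfl | rfl
              · exact absurd hxs hmns
              · exact absurd hxs hpms
              · simp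
            · intro z hz
              rw [List.mem_singleton] at hz
              exact hz ▸ hnmB
          · refine hrun [] ?_ (by simp) List.isChain_nil
            intro x hx hxs
            exfalso
            rcases hBsub x hx with rfl | rfl | rfl
            · exact hmns hxs
            · exact hpms hxs
            · exact hnms hxs
    have connect : ∀ r1 r2 : Fin 4, S.f r1 ∉ B → S.f r2 ∉ B →
        ReachAvoid H B (S.f r1) (S.f r2) := by
      intro r1 r2 hr1 hr2
      by_cases hr12 : r1 = r2
      · exact hr12 ▸ ReachAvoid.refl _ hr1
      by_cases hpair : (x0 = r1 ∧ y0 = r2) ∨ (x0 = r2 ∧ y0 = r1)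
      · -- detour through a third branch vertex
        obtain ⟨g, hg1, hg2⟩ := fin4_third r1 r2
        have hgx : g ≠ x0 := by rcases hpair with ⟨rfl, _⟩ | ⟨rfl, _⟩; exact hg1; exact hg2
        have hgy : g ≠ y0 := by rcases hpair with ⟨_, rfl⟩ | ⟨_, rfl⟩; exact hg2; exact hg1
        have hgB : S.f g ∉ B := hfg_notB g hgx hgy
        have hw1 : ReachAvoid H B (S.f r1) (S.f g) := by
          refine ⟨Pth S (fun h => hg1 h.symm : r1 ≠ g), hclean r1 g _ ?_ hr1 hgB⟩
          rintro (⟨_, rfl⟩ | ⟨rfl, _⟩)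
          · exact hgy rfl
          · exact hgx rfl
        have hw2 : ReachAvoid H B (S.f g) (S.f r2) := by
          refine ⟨Pth S (hg2 : g ≠ r2), hclean g r2 _ ?_ hgB hr2⟩
          rintro (⟨rfl, _⟩ | ⟨_, rfl⟩)
          · exact hgx rfl
          · exact hgy rfl
        exact hw1.trans hw2
      · exact ⟨Pth S hr12, hclean r1 r2 hr12 hpair hr1 hr2⟩
    obtain ⟨r1, hr1, hre1⟩ := escape w1 h1
    obtain ⟨r2, hr2, hre2⟩ := escape w2 h2
    exact (hre1.trans (connect r1 r2 hr1 hr2)).trans hre2.symm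

end FrameProof


namespace FrameProof
open SimpleGraph

variable {W : Type} [DecidableEq W] {H : SimpleGraph W}
variable (S : MultiSubdivision (⊤ : SimpleGraph (Fin 4)).toMultigraph H 1)
variable {F : W → Box} (rep : IsFrameRepresentation H F)

lemma not_mem_closedNb {m x : W} (h1 : x ≠ m) (h2 : ¬H.Adj m x) : x ∉ closedNb H m := by
  rintro (rfl | h)
  · exact h1 rfl
  · exact h2 h

lemma mem_closedNb_self (m : W) : m ∈ closedNb H m := Or.inl rfl

lemma mem_supp_symm {u v : Fin 4} (h : u ≠ v) {z : W} :
    z ∈ (Pth S h.symm).support ↔ z ∈ (Pth S h).support := by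
  rw [Pth_rev, SimpleGraph.Walk.support_reverse, List.mem_reverse]

/-- Two distinct neighbors at a branch vertex, along two specified paths. -/
lemma branch_two_nbrs (c d d' : Fin 4) (hcd : c ≠ d) (hcd' : c ≠ d') (hdd' : d ≠ d') :
    ∃ a b : W, a ≠ b ∧ H.Adj (S.f c) a ∧ H.Adj (S.f c) b ∧
      a ∈ (Pth S hcd).support ∧ b ∈ (Pth S hcd').support := by
  obtain ⟨a, haadj, _, haint, _⟩ := exists_second S hcd
  obtain ⟨b, hbadj, _, hbint, _⟩ := exists_second S hcd'
  refine ⟨a, b, ?_, haadj, hbadj, haint.1, hbint.1⟩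
  intro he
  rcases interior_carrier S hcd hcd' (he ▸ haint) hbint with ⟨_, h'⟩ | ⟨h', _⟩
  · exact hdd' h'
  · exact hcd' h'

/-- At the maximal vertex of a triangle of paths, two distinct neighbors within
the triangle. -/
lemma triangle_nbrs (c1 c2 c3 : Fin 4) (h12 : c1 ≠ c2) (h13 : c1 ≠ c3) (h23 : c2 ≠ c3)
    (sD : W)
    (hmem : sD ∈ (Pth S h12).support ∨ sD ∈ (Pth S h13).support ∨
      sD ∈ (Pth S h23).support) :
    ∃ aD bD : W, aD ≠ bD ∧ H.Adj sD aD ∧ H.Adj sD bD ∧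
      (aD ∈ (Pth S h12).support ∨ aD ∈ (Pth S h13).support ∨
        aD ∈ (Pth S h23).support) ∧
      (bD ∈ (Pth S h12).support ∨ bD ∈ (Pth S h13).support ∨
        bD ∈ (Pth S h23).support) := by
  have hint : ∀ (c d : Fin 4) (hcd : c ≠ d), sD ∈ walkInterior (Pth S hcd) →
      ∃ aD bD : W, aD ≠ bD ∧ H.Adj sD aD ∧ H.Adj sD bD ∧
        aD ∈ (Pth S hcd).support ∧ bD ∈ (Pth S hcd).support := by
    intro c d hcd hin
    obtain ⟨pm, nm, hpnm, _, _, hps, hns, hap, han, _⟩ := interior_nbrs S hcd hin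
    exact ⟨pm, nm, hpnm, hap, han, hps, hns⟩
  rcases hmem with hm | hm | hm
  · rcases mem_supp_cases S h12 hm with rfl | rfl | hin
    · obtain ⟨a, b, hab, ha, hb, has, hbs⟩ := branch_two_nbrs S c1 c2 c3 h12 h13 h23
      exact ⟨a, b, hab, ha, hb, Or.inl has, Or.inr (Or.inl hbs)⟩
    · obtain ⟨a, b, hab, ha, hb, has, hbs⟩ :=
        branch_two_nbrs S c2 c1 c3 h12.symm h23 h13
      exact ⟨a, b, hab, ha, hb, Or.inl ((mem_supp_symm S h12).1 has),
        Or.inr (Or.inr hbs)⟩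
    · obtain ⟨a, b, hab, ha, hb, has, hbs⟩ := hint c1 c2 h12 hin
      exact ⟨a, b, hab, ha, hb, Or.inl has, Or.inl hbs⟩
  · rcases mem_supp_cases S h13 hm with rfl | rfl | hin
    · obtain ⟨a, b, hab, ha, hb, has, hbs⟩ := branch_two_nbrs S c1 c2 c3 h12 h13 h23
      exact ⟨a, b, hab, ha, hb, Or.inl has, Or.inr (Or.inl hbs)⟩
    · obtain ⟨a, b, hab, ha, hb, has, hbs⟩ :=
        branch_two_nbrs S c3 c1 c2 h13.symm h23.symm h12
      exact ⟨a, b, hab, ha, hb, Or.inr (Or.inl ((mem_supp_symm S h13).1 has)),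
        Or.inr (Or.inr ((mem_supp_symm S h23).1 hbs))⟩
    · obtain ⟨a, b, hab, ha, hb, has, hbs⟩ := hint c1 c3 h13 hin
      exact ⟨a, b, hab, ha, hb, Or.inr (Or.inl has), Or.inr (Or.inl hbs)⟩
  · rcases mem_supp_cases S h23 hm with rfl | rfl | hin
    · obtain ⟨a, b, hab, ha, hb, has, hbs⟩ :=
        branch_two_nbrs S c2 c1 c3 h12.symm h23 h13
      exact ⟨a, b, hab, ha, hb, Or.inl ((mem_supp_symm S h12).1 has),
        Or.inr (Or.inr hbs)⟩
    · obtain ⟨a, b, hab, ha, hb, has, hbs⟩ :=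
        branch_two_nbrs S c3 c1 c2 h13.symm h23.symm h12
      exact ⟨a, b, hab, ha, hb, Or.inr (Or.inl ((mem_supp_symm S h13).1 has)),
        Or.inr (Or.inr ((mem_supp_symm S h23).1 hbs))⟩
    · obtain ⟨a, b, hab, ha, hb, has, hbs⟩ := hint c2 c3 h23 hin
      exact ⟨a, b, hab, ha, hb, Or.inr (Or.inr has), Or.inr (Or.inr hbs)⟩

lemma fin4_others : ∀ t : Fin 4, ∃ a b c : Fin 4,
    a ≠ t ∧ b ≠ t ∧ c ≠ t ∧ a ≠ b ∧ a ≠ c ∧ b ≠ c := by decide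


include rep

lemma cross_adj {u v : W} (h : H.Adj u v) :
    CrossB (F u) (F v) ∨ CrossB (F v) (F u) := by
  have hne := h.ne
  exact cross_or_cross ((rep.adj_iff u v hne).1 h)
    (rep.corner_free u v hne) (rep.corner_free v u hne.symm)
    (rep.left_free u v hne) (rep.left_free v u hne.symm)
    (rep.right_cross u v hne) (rep.right_cross v u hne.symm)

lemma frames_disj {u v : W} (hne : u ≠ v) (h : ¬H.Adj u v) :
    (F u).frame ∩ (F v).frame = ∅ := by
  rw [← Set.not_nonempty_iff_eq_empty]
  intro hn
  exact h ((rep.adj_iff u v hne).2 hn)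

lemma cross_max {s a : W} (ha : H.Adj s a) (hle : (F a).x1 ≤ (F s).x1) :
    CrossB (F a) (F s) := by
  rcases cross_adj rep ha with h | h
  · exact absurd h.1 (by linarith)
  · exact h

lemma prop_walk {m : W} {i w : W} (p : H.Walk i w)
    (hsup : ∀ x ∈ p.support, x ∉ closedNb H m)
    (hseed : NestedB (F i) (F m)) : NestedB (F w) (F m) := by
  induction p with
  | nil => exact hseed
  | cons h q ih =>
    rename_i a c d
    have hcB : c ∉ closedNb H m := hsup c (by
      rw [SimpleGraph.Walk.support_cons]
      exact List.mem_cons_of_mem _ q.start_mem_support)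
    have hcm : c ≠ m := fun he => hcB (Or.inl he)
    have hcadj : ¬H.Adj m c := fun ha' => hcB (Or.inr ha')
    have hnext : NestedB (F c) (F m) :=
      nested_step hseed (cross_adj rep h).symm (frames_disj rep hcm (fun h' => hcadj h'.symm))
    exact ih (fun x hx => hsup x (by
      rw [SimpleGraph.Walk.support_cons]
      exact List.mem_cons_of_mem _ hx)) hnext

include S in
lemma big_nested {m i w : W} (hseed : NestedB (F i) (F m)) (hi : i ∉ closedNb H m)
    (hw : w ∉ closedNb H m) : NestedB (F w) (F m) := by
  obtain ⟨p, hp⟩ := conn S m hi hw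
  exact prop_walk rep p hp hseed

include S in
/-- Mutual-containment contradiction from a 3-chain of nested boxes among
pairwise nonadjacent vertices. -/
lemma mutual_contra {i m o : W} (hseed : NestedB (F i) (F m))
    (him_ne : i ≠ m) (him_na : ¬H.Adj m i)
    (hom_ne : o ≠ m) (hom_na : ¬H.Adj m o)
    (hmo : NestedB (F m) (F o)) : False :=
  nested_antisymm (big_nested S rep hseed (not_mem_closedNb him_ne him_na)
    (not_mem_closedNb hom_ne hom_na)) hmo

/-- The final contradiction from a seeded big vertex `q`. -/
lemma finish (s p q : W) (hs_nf : ∀ t : Fin 4, s ≠ S.f t) (hadj_sq : H.Adj s q)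
    (hpq_ne : p ≠ q) (hpq_na : ¬H.Adj p q) (hseed : NestedB (F p) (F q)) : False := by
  -- find an index e such that all paths avoiding e avoid the closed neighborhood of q
  have hfree : ∃ e : Fin 4, ∀ (c d : Fin 4) (hcd : c ≠ d), c ≠ e → d ≠ e →
      ∀ z ∈ (Pth S hcd).support, z ∉ closedNb H q := by
    rcases vclass S q with ⟨tq, rfl⟩ | ⟨xq, yq, hq0, hqint⟩
    · refine ⟨tq, ?_⟩
      intro c d hcd hc hd z hz hzB
      rcases hzB with rfl | hadj
      · rcases f_mem_supp S hcd hz with h' | h'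
        · exact hc h'.symm
        · exact hd h'.symm
      · obtain ⟨d', hd', _, hint⟩ := branch_adj_second S tq hadj
        refine interior_not_elsewhere S hd' hcd hint ?_ hz
        rintro (⟨rfl, _⟩ | ⟨rfl, _⟩)
        · exact hc rfl
        · exact hd rfl
    · obtain ⟨pq, nq, hpn_ne, _, _, hpsupp, hnsupp, hadjp, hadjn, huniq⟩ :=
        interior_nbrs S hq0 hqint
      -- q's neighbors are pq and nq; their possible branch indices
      have main : ∀ e : Fin 4, (e = xq ∨ e = yq) →
          (∀ z, (z = pq ∨ z = nq) → z ∈ walkInterior (Pth S hq0) ∨ z = S.f e) →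
          ∀ (c d : Fin 4) (hcd : c ≠ d), c ≠ e → d ≠ e →
          ∀ z ∈ (Pth S hcd).support, z ∉ closedNb H q := by
        intro e he hz c d hcd hc hd z hzs hzB
        have hpairne : ¬((xq = c ∧ yq = d) ∨ (xq = d ∧ yq = c)) := by
          rcases he with rfl | rfl
          · rintro (⟨rfl, _⟩ | ⟨rfl, _⟩)
            · exact hc rfl
            · exact hd rfl
          · rintro (⟨_, rfl⟩ | ⟨_, rfl⟩)
            · exact hd rfl
            · exact hc rfl
        have hzpn : z = q ∨ z = pq ∨ z = nq := by
          rcases hzB with rfl | hadj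
          · exact Or.inl rfl
          · rcases huniq z hadj with h' | h'
            · exact Or.inr (Or.inl h')
            · exact Or.inr (Or.inr h')
        rcases hzpn with rfl | h' | h'
        · exact interior_not_elsewhere S hq0 hcd hqint hpairne hzs
        · rcases hz z (Or.inl h') with hint | rfl
          · exact interior_not_elsewhere S hq0 hcd hint hpairne hzs
          · rcases f_mem_supp S hcd hzs with h'' | h''
            · exact hc h''.symm
            · exact hd h''.symm
        · rcases hz z (Or.inr h') with hint | rfl
          · exact interior_not_elsewhere S hq0 hcd hint hpairne hzs
          · rcases f_mem_supp S hcd hzs with h'' | h''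
            · exact hc h''.symm
            · exact hd h''.symm
      -- classify pq and nq
      have hclass : ∀ z, (z = pq ∨ z = nq) →
          z ∈ walkInterior (Pth S hq0) ∨ ∃ a, (a = xq ∨ a = yq) ∧ z = S.f a := by
        intro z hz
        have hzs : z ∈ (Pth S hq0).support := by
          rcases hz with rfl | rfl
          · exact hpsupp
          · exact hnsupp
        rcases mem_supp_cases S hq0 hzs with h' | h' | h'
        · exact Or.inr ⟨xq, Or.inl rfl, h'⟩
        · exact Or.inr ⟨yq, Or.inr rfl, h'⟩
        · exact Or.inl h'
      -- s is a neighbor of q and is not a branch vertex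
      have hs_pn : s = pq ∨ s = nq := huniq s hadj_sq.symm
      rcases hclass pq (Or.inl rfl) with hp1 | ⟨a, ha, hp1⟩
      · rcases hclass nq (Or.inr rfl) with hn1 | ⟨a, ha, hn1⟩
        · refine ⟨xq, main xq (Or.inl rfl) ?_⟩
          intro z hz
          rcases hz with rfl | rfl
          · exact Or.inl hp1
          · exact Or.inl hn1
        · refine ⟨a, main a ha ?_⟩
          intro z hz
          rcases hz with rfl | rfl
          · exact Or.inl hp1
          · exact Or.inr hn1
      · rcases hclass nq (Or.inr rfl) with hn1 | ⟨b, hb, hn1⟩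
        · refine ⟨a, main a ha ?_⟩
          intro z hz
          rcases hz with rfl | rfl
          · exact Or.inr hp1
          · exact Or.inl hn1
        · -- both neighbors of q are branch vertices; but s is one of them
          exfalso
          rcases hs_pn with rfl | rfl
          · exact hs_nf a hp1
          · exact hs_nf b hn1
  obtain ⟨e, hfree⟩ := hfree
  obtain ⟨c1, c2, c3, hc1, hc2, hc3, h12, h13, h23⟩ := fin4_others e
  -- the triangle on c1 c2 c3 avoids the closed neighborhood of q
  have hLL : ∀ z, (z ∈ (Pth S h12).support ∨ z ∈ (Pth S h13).support ∨
      z ∈ (Pth S h23).support) → z ∉ closedNb H q := by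
    intro z hz
    rcases hz with h | h | h
    · exact hfree c1 c2 h12 hc1 hc2 z h
    · exact hfree c1 c3 h13 hc1 hc3 z h
    · exact hfree c2 c3 h23 hc2 hc3 z h
  -- maximum of x1 over the triangle
  classical
  set LL : Finset W := ((Pth S h12).support ++ (Pth S h13).support ++
    (Pth S h23).support).toFinset with hLLdef
  have hne : LL.Nonempty := ⟨S.f c1, by
    rw [hLLdef, List.mem_toFinset, List.append_assoc, List.mem_append]
    exact Or.inl (Pth S h12).start_mem_support⟩
  obtain ⟨sD, hsDmem, hsDmax⟩ := LL.exists_max_image (fun w => (F w).x1) hne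
  have hmemLL : ∀ z : W, z ∈ LL ↔ (z ∈ (Pth S h12).support ∨ z ∈ (Pth S h13).support ∨
      z ∈ (Pth S h23).support) := by
    intro z
    rw [hLLdef, List.mem_toFinset, List.append_assoc, List.mem_append, List.mem_append]
  obtain ⟨aD, bD, habD, haadj, hbadj, hamem, hbmem⟩ :=
    triangle_nbrs S c1 c2 c3 h12 h13 h23 sD ((hmemLL sD).1 hsDmem)
  -- sink at sD
  have hanadj : ¬H.Adj aD bD := fun h => no_triangle S haadj h hbadj
  have hcra : CrossB (F aD) (F sD) :=
    cross_max rep haadj (hsDmax aD ((hmemLL aD).2 hamem))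
  have hcrb : CrossB (F bD) (F sD) :=
    cross_max rep hbadj (hsDmax bD ((hmemLL bD).2 hbmem))
  have haB : aD ∉ closedNb H q := hLL aD hamem
  have hbB : bD ∉ closedNb H q := hLL bD hbmem
  -- mutual containment
  have hmain : ∀ pD qD : W, NestedB (F pD) (F qD) → pD ≠ qD → ¬H.Adj pD qD →
      pD ∉ closedNb H q → qD ∉ closedNb H q → False := by
    intro pD qD hseedD hne' hna' hpB hqB
    have hq_ne : q ≠ qD := fun h => hqB (h ▸ mem_closedNb_self q)
    have hq_na : ¬H.Adj qD q := fun h => hqB (Or.inr h.symm)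
    have X : NestedB (F qD) (F q) := big_nested S rep hseed
      (not_mem_closedNb hpq_ne (fun h => hpq_na h.symm)) hqB
    have Y : NestedB (F q) (F qD) := big_nested S rep hseedD
      (not_mem_closedNb hne' (fun h => hna' h.symm))
      (not_mem_closedNb hq_ne hq_na)
    exact nested_antisymm X Y
  rcases sink_nested hcra hcrb (frames_disj rep habD hanadj) with hn | hn
  · exact hmain aD bD hn habD hanadj haB hbB
  · exact hmain bD aD hn (fun h => habD h.symm) (fun h => hanadj h.symm) hbB haB

end FrameProof


/-- No `≥1`-subdivision of `K₄` is a restricted frame graph: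
no graph obtained from `K₄` by subdividing every edge at least once is a restricted
frame graph. -/
theorem no_ge_one_subdivision_K4_isRestrictedFrameGraph
    {W : Type} [Fintype W] (H : SimpleGraph W)
    (hsub : IsSubdivisionGE (⊤ : SimpleGraph (Fin 4)).toMultigraph 1 H) :
    ¬ IsRestrictedFrameGraph H := by
  classical
  intro hRFG
  obtain ⟨F, rep⟩ := hRFG
  obtain ⟨S⟩ := hsub
  open FrameProof in
  obtain ⟨s, hsmem, hsmax'⟩ := (Finset.univ : Finset W).exists_max_image
    (fun w => (F w).x1) ⟨S.f 0, Finset.mem_univ _⟩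
  have hsmax : ∀ w : W, (F w).x1 ≤ (F s).x1 := fun w => hsmax' w (Finset.mem_univ w)
  rcases FrameProof.vclass S s with ⟨t, rfl⟩ | ⟨x0, y0, h0, hsint⟩
  · -- the maximal vertex is a branch vertex
    obtain ⟨d1, d2, d3, hd1, hd2, hd3, hdd1, hdd2, hdd3⟩ := FrameProof.fin4_others t
    obtain ⟨a1, ha1adj, _, ha1int, _⟩ := FrameProof.exists_second S (hd1.symm : t ≠ d1)
    obtain ⟨a2, ha2adj, _, ha2int, _⟩ := FrameProof.exists_second S (hd2.symm : t ≠ d2)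
    obtain ⟨a3, ha3adj, _, ha3int, _⟩ := FrameProof.exists_second S (hd3.symm : t ≠ d3)
    have hne : ∀ (x y : Fin 4) (hx : t ≠ x) (hy : t ≠ y) (ax ay : W), x ≠ y →
        ax ∈ walkInterior (FrameProof.Pth S hx) → ay ∈ walkInterior (FrameProof.Pth S hy) →
        ax ≠ ay := by
      intro x y hx hy ax ay hxy hax hay he
      rcases FrameProof.interior_carrier S hx hy (he ▸ hax) hay with ⟨_, h'⟩ | ⟨h', _⟩
      · exact hxy h'
      · exact hy h'
    have hne12 : a1 ≠ a2 := hne d1 d2 hd1.symm hd2.symm a1 a2 hdd1 ha1int ha2int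
    have hne13 : a1 ≠ a3 := hne d1 d3 hd1.symm hd3.symm a1 a3 hdd2 ha1int ha3int
    have hne23 : a2 ≠ a3 := hne d2 d3 hd2.symm hd3.symm a2 a3 hdd3 ha2int ha3int
    have hna12 : ¬H.Adj a1 a2 := fun h => FrameProof.no_triangle S ha1adj h ha2adj
    have hna13 : ¬H.Adj a1 a3 := fun h => FrameProof.no_triangle S ha1adj h ha3adj
    have hna23 : ¬H.Adj a2 a3 := fun h => FrameProof.no_triangle S ha2adj h ha3adj
    have hcr1 := FrameProof.cross_max rep ha1adj (hsmax a1)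
    have hcr2 := FrameProof.cross_max rep ha2adj (hsmax a2)
    have hcr3 := FrameProof.cross_max rep ha3adj (hsmax a3)
    have N12 := FrameProof.sink_nested hcr1 hcr2 (FrameProof.frames_disj rep hne12 hna12)
    have N13 := FrameProof.sink_nested hcr1 hcr3 (FrameProof.frames_disj rep hne13 hna13)
    have N23 := FrameProof.sink_nested hcr2 hcr3 (FrameProof.frames_disj rep hne23 hna23)
    rcases N12 with n12 | n21 <;> rcases N13 with n13 | n31 <;> rcases N23 with n23 | n32
    · exact FrameProof.mutual_contra S rep n12 hne12 (fun h => hna12 h.symm)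
        (fun h => hne23 h.symm) hna23 n23
    · exact FrameProof.mutual_contra S rep n13 hne13 (fun h => hna13 h.symm)
        hne23 (fun h => hna23 h.symm) n32
    · exact FrameProof.nested_antisymm (FrameProof.nested_trans n12 n23) n31
    · exact FrameProof.mutual_contra S rep n31 (fun h => hne13 h.symm) hna13
        (fun h => hne12 h.symm) hna12 n12
    · exact FrameProof.mutual_contra S rep n21 (fun h => hne12 h.symm) hna12
        (fun h => hne13 h.symm) hna13 n13
    · exact FrameProof.nested_antisymm (FrameProof.nested_trans n21 n13) n32
    · exact FrameProof.mutual_contra S rep n23 hne23 (fun h => hna23 h.symm)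
        hne13 (fun h => hna13 h.symm) n31
    · exact FrameProof.mutual_contra S rep n32 (fun h => hne23 h.symm) hna23
        hne12 (fun h => hna12 h.symm) n21
  · -- the maximal vertex is interior
    obtain ⟨pm, nm, hpnm, _, _, _, _, hadjp, hadjn, _⟩ :=
      FrameProof.interior_nbrs S h0 hsint
    have hs_nf : ∀ t : Fin 4, s ≠ S.f t := FrameProof.interior_not_f S h0 hsint
    have hna : ¬H.Adj pm nm := fun h => FrameProof.no_triangle S hadjp h hadjn
    have hcp := FrameProof.cross_max rep hadjp (hsmax pm)
    have hcn := FrameProof.cross_max rep hadjn (hsmax nm)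
    rcases FrameProof.sink_nested hcp hcn (FrameProof.frames_disj rep hpnm hna) with hn | hn
    · exact FrameProof.finish S rep s pm nm hs_nf hadjn hpnm hna hn
    · exact FrameProof.finish S rep s nm pm hs_nf hadjp (fun h => hpnm h.symm)
        (fun h => hna h.symm) hn
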